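/- arXiv:1602.03311 — 14 statements merged into one kernel-verified Lean document; each statement's English description precedes it below -/
import Mathlib

section
/- Let A be an n×n pairwise comparison matrix (n ≥ 3) and w a positive weight vector. Then w is efficient for A if and only if w is internally efficient for A; i.e., a dominating positive weight vector w′ exists if and only if an internally dominating positive weight vector exists. -/
/-- For a pairwise comparison matrix `A` (n ≥ 3, positive, reciprocal)
and a positive weight vector `w`, `w` is efficient iff it is internally efficient. -/
theorem efficiency_iff_internal_efficiency
    {n : ℕ} (hn : 3 ≤ n) (A : Matrix (Fin n) (Fin n) ℝ)
    (hApos : ∀ i j, 0 < A i j) (hArec : ∀ i j, A i j = (A j i)⁻¹)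
    (w : Fin n → ℝ) (hw : ∀ i, 0 < w i) :
    (¬ ∃ w' : Fin n → ℝ, (∀ i, 0 < w' i) ∧
        (∀ i j, |A i j - w' i / w' j| ≤ |A i j - w i / w j|) ∧
        (∃ k l, |A k l - w' k / w' l| < |A k l - w k / w l|)) ↔
    (¬ ∃ w' : Fin n → ℝ, (∀ i, 0 < w' i) ∧
        (∀ i j, (A i j ≤ w i / w j → A i j ≤ w' i / w' j ∧ w' i / w' j ≤ w i / w j) ∧
                (A i j ≥ w i / w j → A i j ≥ w' i / w' j ∧ w' i / w' j ≥ w i / w j)) ∧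
        (∃ k l, (A k l ≤ w k / w l ∧ w' k / w' l < w k / w l) ∨
                (A k l ≥ w k / w l ∧ w' k / w' l > w k / w l))) := by
  constructor
  · -- internal dominance ⇒ dominance (contrapositive form)
    intro hP hQ
    apply hP
    obtain ⟨w', hw', hdom, k, l, hkl⟩ := hQ
    refine ⟨w', hw', ?_, k, l, ?_⟩
    · intro i j
      rcases le_total (A i j) (w i / w j) with h | h
      · obtain ⟨h1, h2⟩ := (hdom i j).1 h
        rw [abs_of_nonpos (by linarith), abs_of_nonpos (by linarith)]
        linarith
      · obtain ⟨h1, h2⟩ := (hdom i j).2 h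
        rw [abs_of_nonneg (by linarith), abs_of_nonneg (by linarith)]
        linarith
    · rcases hkl with ⟨h, hs⟩ | ⟨h, hs⟩
      · obtain ⟨h1, h2⟩ := (hdom k l).1 h
        rw [abs_of_nonpos (by linarith), abs_of_nonpos (by linarith)]
        linarith
      · obtain ⟨h1, h2⟩ := (hdom k l).2 h
        rw [abs_of_nonneg (by linarith), abs_of_nonneg (by linarith)]
        linarith
  · -- dominance ⇒ internal dominance
    intro hQ hP
    apply hQ
    obtain ⟨w', hw', hdom, k, l, hkl⟩ := hP
    set f0 : Fin n → Fin n → ℝ := fun i j => w i - A i j * w j with hf0def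
    set f1 : Fin n → Fin n → ℝ := fun i j => w' i - A i j * w' j with hf1def
    -- consequences of dominance
    have key : ∀ i j, (0 ≤ f0 i j → w' i * w j ≤ w i * w' j) ∧
        (f0 i j ≤ 0 → w i * w' j ≤ w' i * w j) ∧ (f0 i j = 0 → f1 i j = 0) := by
      intro i j
      have hwj := hw j
      have hw'j := hw' j
      have hd := hdom i j
      refine ⟨?_, ?_, ?_⟩
      · intro h
        have hA : A i j ≤ w i / w j := by
          rw [le_div_iff₀ hwj]; simp only [hf0def] at h; linarith
        have habs : |A i j - w i / w j| = w i / w j - A i j := by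
          rw [abs_of_nonpos (by linarith)]; ring
        rw [habs] at hd
        have h2 := abs_le.mp hd
        have h3 : w' i / w' j ≤ w i / w j := by linarith [h2.1, h2.2]
        exact (div_le_div_iff₀ hw'j hwj).mp h3
      · intro h
        have hA : w i / w j ≤ A i j := by
          rw [div_le_iff₀ hwj]; simp only [hf0def] at h; linarith
        have habs : |A i j - w i / w j| = A i j - w i / w j := abs_of_nonneg (by linarith)
        rw [habs] at hd
        have h2 := abs_le.mp hd
        have h3 : w i / w j ≤ w' i / w' j := by linarith [h2.1, h2.2]
        exact (div_le_div_iff₀ hwj hw'j).mp h3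
      · intro h
        have hA : A i j = w i / w j := by
          field_simp
          simp only [hf0def] at h; linarith
        rw [hA] at hd
        simp only [sub_self, abs_zero] at hd
        have h2 : w' i / w' j = w i / w j := by
          have := abs_nonneg (w i / w j - w' i / w' j)
          have h3 : |w i / w j - w' i / w' j| = 0 := le_antisymm hd (abs_nonneg _)
          have := abs_eq_zero.mp h3
          linarith
        simp only [hf1def]
        have h4 : w' i = (w i / w j) * w' j := by
          rw [← h2]; field_simp
        rw [← hA] at h4
        linarith
    -- choose ε
    have hne : (Finset.univ : Finset (Fin n × Fin n)).Nonempty := by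
      refine ⟨(⟨0, by omega⟩, ⟨0, by omega⟩), Finset.mem_univ _⟩
    set g : Fin n × Fin n → ℝ := fun p =>
      if f0 p.1 p.2 * f1 p.1 p.2 < 0 then
        min 1 (f0 p.1 p.2 / (f0 p.1 p.2 - f1 p.1 p.2)) else 1 with hgdef
    set ε : ℝ := Finset.univ.inf' hne g with hεdef
    have hgpos : ∀ p : Fin n × Fin n, 0 < g p := by
      intro p
      simp only [hgdef]
      split_ifs with h
      · refine lt_min one_pos ?_
        rcases mul_neg_iff.mp h with ⟨h0, h1⟩ | ⟨h0, h1⟩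
        · exact div_pos h0 (by linarith)
        · exact div_pos_of_neg_of_neg h0 (by linarith)
      · exact one_pos
    have hεpos : 0 < ε := by
      rw [hεdef, Finset.lt_inf'_iff]
      intro p _
      exact hgpos p
    have hεle1 : ε ≤ 1 := by
      have := Finset.inf'_le g (Finset.mem_univ ((⟨0, by omega⟩, ⟨0, by omega⟩) : Fin n × Fin n))
      calc ε ≤ g (⟨0, by omega⟩, ⟨0, by omega⟩) := this
        _ ≤ 1 := by simp only [hgdef]; split_ifs <;> simp
    have hεleg : ∀ i j, ε ≤ g (i, j) := fun i j =>
      Finset.inf'_le g (Finset.mem_univ _)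
    -- sign preservation
    have sign : ∀ i j, (0 ≤ f0 i j → 0 ≤ (1 - ε) * f0 i j + ε * f1 i j) ∧
        (f0 i j ≤ 0 → (1 - ε) * f0 i j + ε * f1 i j ≤ 0) := by
      intro i j
      constructor
      · intro h0
        rcases le_or_gt 0 (f1 i j) with h1 | h1
        · have := hεpos; have := hεle1; nlinarith
        · have h0' : 0 < f0 i j := by
            rcases lt_or_eq_of_le h0 with h | h
            · exact h
            · exfalso; have := (key i j).2.2 h.symm; linarith
          have hmul : f0 i j * f1 i j < 0 := mul_neg_of_pos_of_neg h0' h1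
          have hg : g (i, j) = min 1 (f0 i j / (f0 i j - f1 i j)) := by
            simp only [hgdef]; rw [if_pos hmul]
          have hεb : ε ≤ f0 i j / (f0 i j - f1 i j) := by
            have := hεleg i j; rw [hg] at this
            exact le_trans this (min_le_right _ _)
          have hden : 0 < f0 i j - f1 i j := by linarith
          have : ε * (f0 i j - f1 i j) ≤ f0 i j := by
            rw [← le_div_iff₀ hden]; exact hεb
          linarith [mul_nonneg hεpos.le (sub_nonneg.mpr h1.le)]
      · intro h0
        rcases le_or_gt (f1 i j) 0 with h1 | h1
        · have := hεpos; have := hεle1; nlinarith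
        · have h0' : f0 i j < 0 := by
            rcases lt_or_eq_of_le h0 with h | h
            · exact h
            · exfalso; have := (key i j).2.2 h; linarith
          have hmul : f0 i j * f1 i j < 0 := mul_neg_of_neg_of_pos h0' h1
          have hg : g (i, j) = min 1 (f0 i j / (f0 i j - f1 i j)) := by
            simp only [hgdef]; rw [if_pos hmul]
          have hεb : ε ≤ f0 i j / (f0 i j - f1 i j) := by
            have := hεleg i j; rw [hg] at this
            exact le_trans this (min_le_right _ _)
          have hden : f0 i j - f1 i j < 0 := by linarith
          have : f0 i j ≤ ε * (f0 i j - f1 i j) := by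
            exact (le_div_iff_of_neg hden).mp hεb
          linarith
    -- the witness
    set w'' : Fin n → ℝ := fun i => (1 - ε) * w i + ε * w' i with hw''def
    have hw''pos : ∀ i, 0 < w'' i := by
      intro i
      simp only [hw''def]
      have h1 : 0 ≤ (1 - ε) * w i := mul_nonneg (by linarith) (hw i).le
      have h2 : 0 < ε * w' i := mul_pos hεpos (hw' i)
      linarith
    have hfe : ∀ i j, w'' i - A i j * w'' j = (1 - ε) * f0 i j + ε * f1 i j := by
      intro i j; simp only [hw''def, hf0def, hf1def]; ring
    refine ⟨w'', hw''pos, ?_, k, l, ?_⟩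
    · intro i j
      have hwj := hw j; have hw''j := hw''pos j
      constructor
      · intro h
        have h0 : 0 ≤ f0 i j := by
          simp only [hf0def]; rw [le_div_iff₀ hwj] at h; linarith
        constructor
        · rw [le_div_iff₀ hw''j]
          have := (sign i j).1 h0
          rw [← hfe i j] at this; linarith
        · rw [div_le_div_iff₀ hw''j hwj]
          have hk := (key i j).1 h0
          have : w'' i * w j = (1 - ε) * (w i * w j) + ε * (w' i * w j) := by
            simp only [hw''def]; ring
          rw [this]
          have : w i * w'' j = (1 - ε) * (w i * w j) + ε * (w i * w' j) := by
            simp only [hw''def]; ring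
          rw [this]
          nlinarith
      · intro h
        have h0 : f0 i j ≤ 0 := by
          simp only [hf0def]; rw [ge_iff_le, div_le_iff₀ hwj] at h; linarith
        constructor
        · rw [ge_iff_le, div_le_iff₀ hw''j]
          have := (sign i j).2 h0
          rw [← hfe i j] at this; linarith
        · rw [ge_iff_le, div_le_div_iff₀ hwj hw''j]
          have hk := (key i j).2.1 h0
          have e1 : w'' i * w j = (1 - ε) * (w i * w j) + ε * (w' i * w j) := by
            simp only [hw''def]; ring
          have e2 : w i * w'' j = (1 - ε) * (w i * w j) + ε * (w i * w' j) := by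
            simp only [hw''def]; ring
          rw [e1, e2]
          nlinarith
    · -- strict part
      have hwl := hw l; have hw'l := hw' l; have hw''l := hw''pos l
      rcases le_total (A k l) (w k / w l) with h | h
      · left
        refine ⟨h, ?_⟩
        have habs : |A k l - w k / w l| = w k / w l - A k l := by
          rw [abs_of_nonpos (by linarith)]; ring
        rw [habs] at hkl
        have h2 : w' k / w' l - A k l ≤ |A k l - w' k / w' l| := by
          rw [abs_sub_comm]; exact le_abs_self _
        have h3 : w' k / w' l < w k / w l := by linarith
        have h4 : w' k * w l < w k * w' l := (div_lt_div_iff₀ hw'l hwl).mp h3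
        rw [div_lt_div_iff₀ hw''l hwl]
        have e1 : w'' k * w l = (1 - ε) * (w k * w l) + ε * (w' k * w l) := by
          simp only [hw''def]; ring
        have e2 : w k * w'' l = (1 - ε) * (w k * w l) + ε * (w k * w' l) := by
          simp only [hw''def]; ring
        rw [e1, e2]
        nlinarith
      · right
        refine ⟨h, ?_⟩
        have habs : |A k l - w k / w l| = A k l - w k / w l := abs_of_nonneg (by linarith)
        rw [habs] at hkl
        have h2 : A k l - w' k / w' l ≤ |A k l - w' k / w' l| := le_abs_self _
        have h3 : w k / w l < w' k / w' l := by linarith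
        have h4 : w k * w' l < w' k * w l := (div_lt_div_iff₀ hwl hw'l).mp h3
        rw [gt_iff_lt, div_lt_div_iff₀ hwl hw''l]
        have e1 : w'' k * w l = (1 - ε) * (w k * w l) + ε * (w' k * w l) := by
          simp only [hw''def]; ring
        have e2 : w k * w'' l = (1 - ε) * (w k * w l) + ε * (w k * w' l) := by
          simp only [hw''def]; ring
        rw [e1, e2]
        nlinarith
end

section
/- Let A be an n×n pairwise comparison matrix (n ≥ 3) and w a positive weight vector. Then w is efficient for A if and only if w is locally efficient for A, i.e., if and only if there exists an open neighborhood V of w in ℝ^n such that no positive weight vector w′ ∈ V dominates w. -/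
lemma conv_ratio (a b c d t : ℝ) (hc : 0 < c) (hd : 0 < d) (ht0 : 0 < t) (ht1 : t < 1) :
    ∃ s : ℝ, 0 < s ∧ s < 1 ∧
      ((1-t)*a + t*b) / ((1-t)*c + t*d) = (1-s) * (a/c) + s * (b/d) := by
  have h1t : 0 < 1 - t := by linarith
  have hD : 0 < (1-t)*c + t*d := by positivity
  refine ⟨t*d/((1-t)*c + t*d), by positivity, ?_, ?_⟩
  · rw [div_lt_one hD]; nlinarith
  · field_simp; ring

lemma dist_conv (x r0 r1 s : ℝ) (hs0 : 0 < s) (hs1 : s < 1) :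
    (|x - r1| ≤ |x - r0| → |x - ((1-s)*r0 + s*r1)| ≤ |x - r0|) ∧
    (|x - r1| < |x - r0| → |x - ((1-s)*r0 + s*r1)| < |x - r0|) := by
  have h : x - ((1-s)*r0 + s*r1) = (1-s)*(x-r0) + s*(x-r1) := by ring
  have h2 : |(1-s)*(x-r0) + s*(x-r1)| ≤ (1-s)*|x-r0| + s*|x-r1| := by
    calc |(1-s)*(x-r0) + s*(x-r1)| ≤ |(1-s)*(x-r0)| + |s*(x-r1)| := abs_add_le _ _
      _ = (1-s)*|x-r0| + s*|x-r1| := by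
          rw [abs_mul, abs_mul, abs_of_pos hs0, abs_of_pos (by linarith : (0:ℝ) < 1-s)]
  constructor <;> intro hle <;> rw [h] <;> nlinarith

/-- `w` is efficient iff it is locally efficient, i.e. iff there is an
open neighborhood `V` of `w` in which no positive weight vector dominates `w`. -/
theorem efficiency_iff_local_efficiency
    {n : ℕ} (hn : 3 ≤ n) (A : Matrix (Fin n) (Fin n) ℝ)
    (hApos : ∀ i j, 0 < A i j) (hArec : ∀ i j, A i j = (A j i)⁻¹)
    (w : Fin n → ℝ) (hw : ∀ i, 0 < w i) :
    (¬ ∃ w' : Fin n → ℝ, (∀ i, 0 < w' i) ∧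
        (∀ i j, |A i j - w' i / w' j| ≤ |A i j - w i / w j|) ∧
        (∃ k l, |A k l - w' k / w' l| < |A k l - w k / w l|)) ↔
    (∃ V : Set (Fin n → ℝ), IsOpen V ∧ w ∈ V ∧
      ¬ ∃ w' : Fin n → ℝ, w' ∈ V ∧ (∀ i, 0 < w' i) ∧
        (∀ i j, |A i j - w' i / w' j| ≤ |A i j - w i / w j|) ∧
        (∃ k l, |A k l - w' k / w' l| < |A k l - w k / w l|)) := by
  constructor
  · intro h
    refine ⟨Set.univ, isOpen_univ, trivial, ?_⟩
    rintro ⟨w', -, h1, h2, h3⟩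
    exact h ⟨w', h1, h2, h3⟩
  · rintro ⟨V, hVopen, hwV, hno⟩ ⟨w', hw'pos, hweak, k, l, hstrict⟩
    set f : ℝ → (Fin n → ℝ) := fun t i => (1-t) * w i + t * w' i with hf
    have hf0 : f 0 = w := by funext i; simp [hf]
    have hcont : Continuous f := by
      apply continuous_pi
      intro i
      fun_prop
    have hev : ∀ᶠ t in nhds (0:ℝ), f t ∈ V :=
      (hcont.continuousAt (x := (0:ℝ))).eventually_mem
        (by rw [hf0]; exact hVopen.mem_nhds hwV)
    rw [Metric.eventually_nhds_iff] at hev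
    obtain ⟨ε, hε, hball⟩ := hev
    set t : ℝ := min (ε/2) (1/2) with htdef
    have ht0 : 0 < t := by positivity
    have ht1 : t < 1 := lt_of_le_of_lt (min_le_right _ _) (by norm_num)
    have htε : dist t 0 < ε := by
      rw [Real.dist_eq, sub_zero, abs_of_pos ht0]
      exact lt_of_le_of_lt (min_le_left _ _) (by linarith)
    have htV : f t ∈ V := hball htε
    have hpos : ∀ i, 0 < f t i := fun i => by
      have := hw i; have := hw'pos i
      have : 0 < 1 - t := by linarith
      simp only [hf]
      positivity
    apply hno
    refine ⟨f t, htV, hpos, ?_, k, l, ?_⟩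
    · intro i j
      obtain ⟨s, hs0, hs1, hs⟩ := conv_ratio (w i) (w' i) (w j) (w' j) t (hw j) (hw'pos j) ht0 ht1
      have : f t i / f t j = (1-s) * (w i / w j) + s * (w' i / w' j) := hs
      rw [this]
      exact (dist_conv (A i j) (w i / w j) (w' i / w' j) s hs0 hs1).1 (hweak i j)
    · obtain ⟨s, hs0, hs1, hs⟩ := conv_ratio (w k) (w' k) (w l) (w' l) t (hw l) (hw'pos l) ht0 ht1
      have : f t k / f t l = (1-s) * (w k / w l) + s * (w' k / w' l) := hs
      rw [this]
      exact (dist_conv (A k l) (w k / w l) (w' k / w' l) s hs0 hs1).2 hstrict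
end

section
/- Let A be an n×n pairwise comparison matrix (n ≥ 3) and w a positive weight vector. Then w is efficient for A if and only if the directed graph G = (V, E) with V = {1,…,n} and arcs (i → j) for all i ≠ j with w_i/w_j ≥ a_ij is strongly connected, i.e., for every pair of distinct vertices i, j there is a directed path from i to j. -/
/-- `w` is efficient iff the digraph with arcs i → j (i ≠ j, w i / w j ≥ A i j)
is strongly connected (a directed path between every pair of distinct vertices). -/
theorem efficiency_iff_strongly_connected
    {n : ℕ} (hn : 3 ≤ n) (A : Matrix (Fin n) (Fin n) ℝ)
    (hApos : ∀ i j, 0 < A i j) (hArec : ∀ i j, A i j = (A j i)⁻¹)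
    (w : Fin n → ℝ) (hw : ∀ i, 0 < w i) :
    (¬ ∃ w' : Fin n → ℝ, (∀ i, 0 < w' i) ∧
        (∀ i j, |A i j - w' i / w' j| ≤ |A i j - w i / w j|) ∧
        (∃ k l, |A k l - w' k / w' l| < |A k l - w k / w l|)) ↔
    (∀ i j : Fin n, i ≠ j →
      Relation.TransGen (fun p q : Fin n => p ≠ q ∧ A p q ≤ w p / w q) i j) := by
  classical
  set r : Fin n → Fin n → Prop := fun p q : Fin n => p ≠ q ∧ A p q ≤ w p / w q with hr
  have hdivpos : ∀ p q : Fin n, 0 < w p / w q := fun p q => div_pos (hw p) (hw q)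
  constructor
  · -- efficient → strongly connected
    intro heff i j hij
    by_contra hnot
    apply heff
    set S : Set (Fin n) := {p | Relation.ReflTransGen r i p} with hS
    have hiS : i ∈ S := Relation.ReflTransGen.refl
    have hjS : j ∉ S := by
      intro hj
      rcases (Relation.reflTransGen_iff_eq_or_transGen).1 hj with h | h
      · exact hij h.symm
      · exact hnot h
    -- S is closed: no arcs leave S
    have hclosed : ∀ p ∈ S, ∀ q, q ∉ S → w p / w q < A p q := by
      intro p hp q hq
      by_contra hle
      push_neg at hle
      have hpq : p ≠ q := by rintro rfl; exact hq hp
      exact hq (Relation.ReflTransGen.tail hp ⟨hpq, hle⟩)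
    -- the scaling factor
    set P : Finset (Fin n × Fin n) :=
      Finset.univ.filter (fun pq => pq.1 ∈ S ∧ pq.2 ∉ S) with hP
    have hPne : P.Nonempty := ⟨(i, j), by simp [hP, hiS, hjS]⟩
    set f : Fin n × Fin n → ℝ := fun pq => A pq.1 pq.2 / (w pq.1 / w pq.2) with hf
    set m : ℝ := P.inf' hPne f with hm
    have hm1 : 1 < m := by
      rw [hm, Finset.lt_inf'_iff]
      intro pq hpq
      rw [hP, Finset.mem_filter] at hpq
      exact (one_lt_div (hdivpos _ _)).2 (hclosed _ hpq.2.1 _ hpq.2.2)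
    have hm0 : 0 < m := lt_trans one_pos hm1
    have hmle : ∀ p ∈ S, ∀ q, q ∉ S → m * (w p / w q) ≤ A p q := by
      intro p hp q hq
      have hmf : m ≤ f (p, q) := Finset.inf'_le f (by simp [hP, hp, hq])
      rw [hf] at hmf
      calc m * (w p / w q) ≤ (A p q / (w p / w q)) * (w p / w q) :=
            mul_le_mul_of_nonneg_right hmf (le_of_lt (hdivpos p q))
        _ = A p q := div_mul_cancel₀ _ (ne_of_gt (hdivpos p q))
    -- key estimate for the pair (x ∈ S, y ∉ S)
    have hkey : ∀ x ∈ S, ∀ y, y ∉ S →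
        w x / w y < m * (w x / w y) ∧ m * (w x / w y) ≤ A x y := by
      intro x hx y hy
      exact ⟨(lt_mul_iff_one_lt_left (hdivpos x y)).2 hm1, hmle x hx y hy⟩
    refine ⟨fun p => if p ∈ S then m * w p else w p, ?_, ?_, i, j, ?_⟩
    · intro p
      by_cases hp : p ∈ S <;> simp [hp, hw p, mul_pos hm0 (hw p)]
    · intro x y
      by_cases hx : x ∈ S <;> by_cases hy : y ∈ S <;> simp only [hx, hy, if_true, if_false]
      · rw [mul_div_mul_left _ _ (ne_of_gt hm0)]
      · -- x ∈ S, y ∉ S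
        obtain ⟨h3, h2⟩ := hkey x hx y hy
        have h1 : w x / w y < A x y := hclosed x hx y hy
        have e : m * w x / w y = m * (w x / w y) := mul_div_assoc m (w x) (w y)
        rw [e, abs_of_nonneg (by linarith), abs_of_nonneg (by linarith)]
        linarith
      · -- x ∉ S, y ∈ S
        have h1 : w y / w x < A y x := hclosed y hy x hx
        have h2 : m * (w y / w x) ≤ A y x := hmle y hy x hx
        rw [hArec y x] at h1 h2
        have hAxy := hApos x y
        have hwx := hw x; have hwy := hw y
        have h1' : A x y * w y < w x := by
          have h := (div_lt_iff₀ hwx).1 h1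
          have := mul_lt_mul_of_pos_left h hAxy
          rw [← mul_assoc, mul_inv_cancel₀ (ne_of_gt hAxy), one_mul] at this
          nlinarith
        have h2' : A x y * (m * w y) ≤ w x := by
          have h : m * (w y / w x) * w x ≤ (A x y)⁻¹ * w x :=
            mul_le_mul_of_nonneg_right h2 (le_of_lt hwx)
          rw [mul_assoc, div_mul_cancel₀ _ (ne_of_gt hwx)] at h
          have h3 := mul_le_mul_of_nonneg_left h (le_of_lt hAxy)
          rw [mul_inv_cancel_left₀ (ne_of_gt hAxy)] at h3
          linarith [mul_assoc (A x y) m (w y)]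
        have hnew : A x y ≤ w x / (m * w y) :=
          (le_div_iff₀ (mul_pos hm0 hwy)).2 h2'
        have hold : A x y < w x / w y := (lt_div_iff₀ hwy).2 (by linarith)
        have hmon : w x / (m * w y) ≤ w x / w y := by
          apply div_le_div_of_nonneg_left (le_of_lt hwx) hwy
          nlinarith
        rw [abs_of_nonpos (by linarith), abs_of_nonpos (by linarith)]
        linarith
      · exact le_refl _
    · -- strict improvement at (i, j)
      simp only [hiS, hjS, if_true, if_false]
      obtain ⟨h3, h2⟩ := hkey i hiS j hjS
      have h1 : w i / w j < A i j := hclosed i hiS j hjS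
      have e : m * w i / w j = m * (w i / w j) := mul_div_assoc m (w i) (w j)
      rw [e, abs_of_nonneg (by linarith), abs_of_nonneg (by linarith)]
      linarith
  · -- strongly connected → efficient
    intro hSC
    rintro ⟨w', hw', hle, k, l, hkl⟩
    have hknel : k ≠ l := by
      rintro rfl
      rw [div_self (ne_of_gt (hw k)), div_self (ne_of_gt (hw' k))] at hkl
      exact lt_irrefl _ hkl
    have step : ∀ p q : Fin n, r p q → w' p / w p ≤ w' q / w q := by
      rintro p q ⟨hpq, h⟩
      have h2 := hle p q
      have e1 : |A p q - w p / w q| = w p / w q - A p q := by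
        rw [abs_sub_comm]; exact abs_of_nonneg (by linarith)
      have e2 : w' p / w' q - A p q ≤ |A p q - w' p / w' q| := by
        rw [abs_sub_comm]; exact le_abs_self _
      have hrr : w' p / w' q ≤ w p / w q := by linarith
      rw [div_le_div_iff₀ (hw' q) (hw q)] at hrr
      rw [div_le_div_iff₀ (hw p) (hw q)]
      nlinarith
    have chain : ∀ p q : Fin n, Relation.TransGen r p q → w' p / w p ≤ w' q / w q := by
      intro p q h
      induction h with
      | single h => exact step _ _ h
      | tail _ h ih => exact le_trans ih (step _ _ h)
    have h1 := chain k l (hSC k l hknel)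
    have h2 := chain l k (hSC l k hknel.symm)
    have heq : w' k / w k = w' l / w l := le_antisymm h1 h2
    rw [div_eq_div_iff (ne_of_gt (hw k)) (ne_of_gt (hw l))] at heq
    have heq2 : w' k / w' l = w k / w l := by
      rw [div_eq_div_iff (ne_of_gt (hw' l)) (ne_of_gt (hw l))]
      nlinarith
    rw [heq2] at hkl
    exact lt_irrefl _ hkl
end

section
/- Let A be an n×n pairwise comparison matrix (n ≥ 3) and w a positive weight vector. The set D(w) of positive vectors dominating w is a convex subset of ℝ^n, and if D(w) is nonempty then w does not belong to D(w) but w belongs to the closure of D(w) (hence w is a boundary point of D(w)). -/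
private lemma abs_div_le_iff' {a c k l : ℝ} (hl : 0 < l) :
    |a - k / l| ≤ c ↔ (a - c) * l ≤ k ∧ k ≤ (a + c) * l := by
  rw [abs_sub_le_iff]
  constructor
  · rintro ⟨h1, h2⟩
    have e1 : a - c ≤ k / l := by linarith
    have e2 : k / l ≤ a + c := by linarith
    exact ⟨(le_div_iff₀ hl).mp e1, (div_le_iff₀ hl).mp e2⟩
  · rintro ⟨h1, h2⟩
    have e1 : a - c ≤ k / l := (le_div_iff₀ hl).mpr h1
    have e2 : k / l ≤ a + c := (div_le_iff₀ hl).mpr h2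
    exact ⟨by linarith, by linarith⟩

private lemma abs_div_lt_iff' {a c k l : ℝ} (hl : 0 < l) :
    |a - k / l| < c ↔ (a - c) * l < k ∧ k < (a + c) * l := by
  rw [abs_sub_lt_iff]
  constructor
  · rintro ⟨h1, h2⟩
    have e1 : a - c < k / l := by linarith
    have e2 : k / l < a + c := by linarith
    exact ⟨(lt_div_iff₀ hl).mp e1, (div_lt_iff₀ hl).mp e2⟩
  · rintro ⟨h1, h2⟩
    have e1 : a - c < k / l := (lt_div_iff₀ hl).mpr h1
    have e2 : k / l < a + c := (div_lt_iff₀ hl).mpr h2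
    exact ⟨by linarith, by linarith⟩

private lemma combo_le {a c s t xk xl yk yl : ℝ} (hs : 0 ≤ s) (ht : 0 ≤ t)
    (hxl : 0 < xl) (hyl : 0 < yl) (hzl : 0 < s * xl + t * yl)
    (hx : |a - xk / xl| ≤ c) (hy : |a - yk / yl| ≤ c) :
    |a - (s * xk + t * yk) / (s * xl + t * yl)| ≤ c := by
  rw [abs_div_le_iff' hxl] at hx
  rw [abs_div_le_iff' hyl] at hy
  rw [abs_div_le_iff' hzl]
  constructor
  · nlinarith [mul_le_mul_of_nonneg_left hx.1 hs, mul_le_mul_of_nonneg_left hy.1 ht]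
  · nlinarith [mul_le_mul_of_nonneg_left hx.2 hs, mul_le_mul_of_nonneg_left hy.2 ht]

private lemma combo_lt {a c s t xk xl yk yl : ℝ} (hs : 0 < s) (ht : 0 ≤ t)
    (hxl : 0 < xl) (hyl : 0 < yl) (hzl : 0 < s * xl + t * yl)
    (hx : |a - xk / xl| < c) (hy : |a - yk / yl| ≤ c) :
    |a - (s * xk + t * yk) / (s * xl + t * yl)| < c := by
  rw [abs_div_lt_iff' hxl] at hx
  rw [abs_div_le_iff' hyl] at hy
  rw [abs_div_lt_iff' hzl]
  constructor
  · nlinarith [mul_lt_mul_of_pos_left hx.1 hs, mul_le_mul_of_nonneg_left hy.1 ht]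
  · nlinarith [mul_lt_mul_of_pos_left hx.2 hs, mul_le_mul_of_nonneg_left hy.2 ht]

/-- The dominating set `D(w)` is convex, and if nonempty, then
`w ∉ D(w)` but `w ∈ closure (D(w))`. -/
theorem dominating_set_convex_boundary
    {n : ℕ} (hn : 3 ≤ n) (A : Matrix (Fin n) (Fin n) ℝ)
    (hApos : ∀ i j, 0 < A i j) (hArec : ∀ i j, A i j = (A j i)⁻¹)
    (w : Fin n → ℝ) (hw : ∀ i, 0 < w i) :
    let Dw : Set (Fin n → ℝ) :=
      {x | (∀ i, 0 < x i) ∧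
        (∀ i j, i ≠ j → |A i j - x i / x j| ≤ |A i j - w i / w j|) ∧
        (∃ k l, k ≠ l ∧ |A k l - x k / x l| < |A k l - w k / w l|)}
    Convex ℝ Dw ∧ (Dw.Nonempty → w ∉ Dw ∧ w ∈ closure Dw) := by
  intro Dw
  constructor
  · -- Convexity
    intro x hx y hy s t hs ht hst
    rcases hs.eq_or_lt with rfl | hs'
    · have ht1 : t = 1 := by linarith
      subst ht1
      simpa using hy
    rcases ht.eq_or_lt with rfl | ht'
    · have hs1 : s = 1 := by linarith
      subst hs1
      simpa using hx
    obtain ⟨hxpos, hxle, k, l, hkl, hxlt⟩ := hx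
    obtain ⟨hypos, hyle, _⟩ := hy
    refine ⟨fun i => ?_, fun i j hij => ?_, k, l, hkl, ?_⟩
    · simpa using add_pos (mul_pos hs' (hxpos i)) (mul_pos ht' (hypos i))
    · simp only [Pi.add_apply, Pi.smul_apply, smul_eq_mul]
      exact combo_le hs ht (hxpos j) (hypos j)
        (add_pos (mul_pos hs' (hxpos j)) (mul_pos ht' (hypos j)))
        (hxle i j hij) (hyle i j hij)
    · simp only [Pi.add_apply, Pi.smul_apply, smul_eq_mul]
      exact combo_lt hs' ht (hxpos l) (hypos l)
        (add_pos (mul_pos hs' (hxpos l)) (mul_pos ht' (hypos l)))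
        hxlt (hyle k l hkl)
  · rintro ⟨x, hxpos, hxle, k, l, hkl, hxlt⟩
    constructor
    · rintro ⟨-, -, k', l', -, h⟩
      exact lt_irrefl _ h
    · -- w ∈ closure Dw
      set f : ℕ → (Fin n → ℝ) :=
        fun m => (1 / (m + 1 : ℝ)) • x + (1 - 1 / (m + 1 : ℝ)) • w with hf
      have hs : ∀ m : ℕ, 0 < 1 / (m + 1 : ℝ) := fun m => by positivity
      have ht : ∀ m : ℕ, (0 : ℝ) ≤ 1 - 1 / (m + 1 : ℝ) := by
        intro m
        have h1 : (1 : ℝ) ≤ (m : ℝ) + 1 := by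
          have := Nat.cast_nonneg (α := ℝ) m; linarith
        have h2 : 1 / ((m : ℝ) + 1) ≤ 1 := (div_le_one (by positivity)).mpr h1
        linarith
      have hmem : ∀ m, f m ∈ Dw := by
        intro m
        have hzpos : ∀ i, 0 < f m i := fun i => by
          simp only [hf, Pi.add_apply, Pi.smul_apply, smul_eq_mul]
          exact add_pos_of_pos_of_nonneg (mul_pos (hs m) (hxpos i))
            (mul_nonneg (ht m) (hw i).le)
        refine ⟨hzpos, fun i j hij => ?_, k, l, hkl, ?_⟩
        · simp only [hf, Pi.add_apply, Pi.smul_apply, smul_eq_mul]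
          exact combo_le (hs m).le (ht m) (hxpos j) (hw j)
            (add_pos_of_pos_of_nonneg (mul_pos (hs m) (hxpos j))
              (mul_nonneg (ht m) (hw j).le))
            (hxle i j hij) le_rfl
        · simp only [hf, Pi.add_apply, Pi.smul_apply, smul_eq_mul]
          exact combo_lt (hs m) (ht m) (hxpos l) (hw l)
            (add_pos_of_pos_of_nonneg (mul_pos (hs m) (hxpos l))
              (mul_nonneg (ht m) (hw l).le))
            hxlt le_rfl
      have htend : Filter.Tendsto f Filter.atTop (nhds w) := by
        rw [tendsto_pi_nhds]
        intro i
        have h0 : Filter.Tendsto (fun m : ℕ => 1 / ((m : ℝ) + 1))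
            Filter.atTop (nhds 0) := tendsto_one_div_add_atTop_nhds_zero_nat
        have : Filter.Tendsto
            (fun m : ℕ => (1 / ((m : ℝ) + 1)) * x i + (1 - 1 / ((m : ℝ) + 1)) * w i)
            Filter.atTop (nhds (0 * x i + (1 - 0) * w i)) :=
          ((h0.mul_const (x i)).add ((tendsto_const_nhds.sub h0).mul_const (w i)))
        simp only [hf, Pi.add_apply, Pi.smul_apply, smul_eq_mul]
        simpa using this
      exact mem_closure_of_tendsto htend (Filter.Eventually.of_forall hmem)
end

section
/- Let A be an n×n pairwise comparison matrix (n ≥ 3) and w a positive weight vector. The set SD(w) of positive vectors strongly dominating w is a convex subset of ℝ^n (indeed an intersection of finitely many open half-spaces with the open positive orthant, hence open), and if SD(w) is nonempty then w does not belong to SD(w) but w belongs to the closure of SD(w). -/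
/-- Key rewriting: for positive denominator the absolute difference scales. -/
lemma sd_key_eq (a xi xj : ℝ) (hxj : 0 < xj) :
    |a - xi / xj| * xj = |a * xj - xi| := by
  have h : a - xi / xj = (a * xj - xi) / xj := by field_simp
  rw [h, abs_div, abs_of_pos hxj, div_mul_cancel₀ _ hxj.ne']

lemma sd_key (a c xi xj : ℝ) (hxj : 0 < xj) :
    |a - xi / xj| < c ↔ |a * xj - xi| < c * xj := by
  rw [← sd_key_eq a xi xj hxj]
  exact (mul_lt_mul_iff_of_pos_right hxj).symm

lemma sd_combo_lt {a b p q P Q : ℝ} (ha : 0 ≤ a) (hb : 0 ≤ b) (hab : a + b = 1)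
    (hp : p < P) (hq : q < Q) : a * p + b * q < a * P + b * Q := by
  have h1 : a * p ≤ a * P := mul_le_mul_of_nonneg_left hp.le ha
  have h2 : b * q ≤ b * Q := mul_le_mul_of_nonneg_left hq.le hb
  rcases lt_or_eq_of_le ha with h | h
  · have := mul_lt_mul_of_pos_left hp h
    linarith
  · have hb1 : (0:ℝ) < b := by linarith
    have := mul_lt_mul_of_pos_left hq hb1
    linarith

lemma sd_combo_pos {a b p q : ℝ} (ha : 0 ≤ a) (hb : 0 ≤ b) (hab : a + b = 1)
    (hp : 0 < p) (hq : 0 < q) : 0 < a * p + b * q := by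
  have := sd_combo_lt ha hb hab hp hq
  linarith

/-- The strongly dominating set `SD(w)` is convex and open, and if
nonempty, then `w ∉ SD(w)` but `w ∈ closure (SD(w))`. -/
theorem strongly_dominating_set_convex_open_boundary
    {n : ℕ} (hn : 3 ≤ n) (A : Matrix (Fin n) (Fin n) ℝ)
    (hApos : ∀ i j, 0 < A i j) (hArec : ∀ i j, A i j = (A j i)⁻¹)
    (w : Fin n → ℝ) (hw : ∀ i, 0 < w i) :
    let SDw : Set (Fin n → ℝ) :=
      {x | (∀ i, 0 < x i) ∧
        (∀ i j, i ≠ j → |A i j - x i / x j| < |A i j - w i / w j|)}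
    Convex ℝ SDw ∧ IsOpen SDw ∧ (SDw.Nonempty → w ∉ SDw ∧ w ∈ closure SDw) := by
  intro SDw
  refine ⟨?_, ?_, ?_⟩
  · -- Convexity
    intro x hx y hy a b ha hb hab
    have hpos : ∀ i, 0 < (a • x + b • y) i := by
      intro i
      simp only [Pi.add_apply, Pi.smul_apply, smul_eq_mul]
      exact sd_combo_pos ha hb hab (hx.1 i) (hy.1 i)
    refine ⟨hpos, fun i j hij => ?_⟩
    have hzj := hpos j
    rw [sd_key _ _ _ _ hzj]
    have hx' : |A i j * x j - x i| < |A i j - w i / w j| * x j :=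
      (sd_key _ _ _ _ (hx.1 j)).1 (hx.2 i j hij)
    have hy' : |A i j * y j - y i| < |A i j - w i / w j| * y j :=
      (sd_key _ _ _ _ (hy.1 j)).1 (hy.2 i j hij)
    simp only [Pi.add_apply, Pi.smul_apply, smul_eq_mul]
    have heq : A i j * (a * x j + b * y j) - (a * x i + b * y i)
        = a * (A i j * x j - x i) + b * (A i j * y j - y i) := by ring
    have habs : |A i j * (a * x j + b * y j) - (a * x i + b * y i)|
        ≤ a * |A i j * x j - x i| + b * |A i j * y j - y i| := by
      rw [heq]
      calc |a * (A i j * x j - x i) + b * (A i j * y j - y i)|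
          ≤ |a * (A i j * x j - x i)| + |b * (A i j * y j - y i)| := abs_add_le _ _
        _ = a * |A i j * x j - x i| + b * |A i j * y j - y i| := by
            rw [abs_mul, abs_mul, abs_of_nonneg ha, abs_of_nonneg hb]
    have hlt := sd_combo_lt ha hb hab hx' hy'
    calc |A i j * (a * x j + b * y j) - (a * x i + b * y i)|
        ≤ a * |A i j * x j - x i| + b * |A i j * y j - y i| := habs
      _ < a * (|A i j - w i / w j| * x j) + b * (|A i j - w i / w j| * y j) := hlt
      _ = |A i j - w i / w j| * (a * x j + b * y j) := by ring
  · -- Openness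
    have hset : SDw = (⋂ i, {x : Fin n → ℝ | 0 < x i}) ∩
        ⋂ i, ⋂ j, ⋂ (_ : i ≠ j),
          {x : Fin n → ℝ | |A i j * x j - x i| < |A i j - w i / w j| * x j} := by
      ext x
      simp only [SDw, Set.mem_setOf_eq, Set.mem_inter_iff, Set.mem_iInter]
      constructor
      · rintro ⟨h1, h2⟩
        exact ⟨h1, fun i j hij => (sd_key _ _ _ _ (h1 j)).1 (h2 i j hij)⟩
      · rintro ⟨h1, h2⟩
        exact ⟨h1, fun i j hij => (sd_key _ _ _ _ (h1 j)).2 (h2 i j hij)⟩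
    rw [hset]
    refine IsOpen.inter ?_ ?_
    · exact isOpen_iInter_of_finite fun i =>
        isOpen_lt continuous_const (continuous_apply i)
    · refine isOpen_iInter_of_finite fun i => ?_
      refine isOpen_iInter_of_finite fun j => ?_
      refine isOpen_iInter_of_finite fun _ => ?_
      exact isOpen_lt
        ((continuous_const.mul (continuous_apply j)).sub (continuous_apply i)).abs
        (continuous_const.mul (continuous_apply j))
  · -- Boundary behavior
    rintro ⟨y, hy⟩
    have hi : (⟨0, by omega⟩ : Fin n) ≠ ⟨1, by omega⟩ := by
      intro h
      exact absurd (congrArg Fin.val h) (by simp)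
    constructor
    · intro hwmem
      exact lt_irrefl _ (hwmem.2 _ _ hi)
    · -- w ∈ closure SDw
      have hmem : ∀ t : ℝ, 0 < t → t ≤ 1 →
          (fun i => w i + t * (y i - w i)) ∈ SDw := by
        intro t ht ht1
        have h1t : (0:ℝ) ≤ 1 - t := by linarith
        have hsum : (1 - t) + t = 1 := by ring
        have hposz : ∀ i, 0 < w i + t * (y i - w i) := by
          intro i
          have := sd_combo_pos h1t ht.le hsum (hw i) (hy.1 i)
          nlinarith
        refine ⟨hposz, fun i j hij => ?_⟩
        rw [sd_key _ _ _ _ (hposz j)]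
        have hy' : |A i j * y j - y i| < |A i j - w i / w j| * y j :=
          (sd_key _ _ _ _ (hy.1 j)).1 (hy.2 i j hij)
        have hweq : |A i j - w i / w j| * w j = |A i j * w j - w i| :=
          sd_key_eq _ _ _ (hw j)
        have heq : A i j * (w j + t * (y j - w j)) - (w i + t * (y i - w i))
            = (1 - t) * (A i j * w j - w i) + t * (A i j * y j - y i) := by ring
        have habs : |A i j * (w j + t * (y j - w j)) - (w i + t * (y i - w i))|
            ≤ (1 - t) * |A i j * w j - w i| + t * |A i j * y j - y i| := by
          rw [heq]
          calc |(1 - t) * (A i j * w j - w i) + t * (A i j * y j - y i)|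
              ≤ |(1 - t) * (A i j * w j - w i)| + |t * (A i j * y j - y i)| :=
                abs_add_le _ _
            _ = (1 - t) * |A i j * w j - w i| + t * |A i j * y j - y i| := by
                rw [abs_mul, abs_mul, abs_of_nonneg h1t, abs_of_nonneg ht.le]
        have hstrict : t * |A i j * y j - y i| < t * (|A i j - w i / w j| * y j) :=
          mul_lt_mul_of_pos_left hy' ht
        have hfin : (1 - t) * |A i j * w j - w i| + t * (|A i j - w i / w j| * y j)
            = |A i j - w i / w j| * (w j + t * (y j - w j)) := by
          rw [← hweq]; ring
        linarith
      have htend : Filter.Tendsto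
          (fun k : ℕ => (fun i => w i + (1 / (k + 1) : ℝ) * (y i - w i)))
          Filter.atTop (nhds w) := by
        rw [tendsto_pi_nhds]
        intro i
        have h0 : Filter.Tendsto (fun k : ℕ => (1 / (k + 1) : ℝ))
            Filter.atTop (nhds 0) := tendsto_one_div_add_atTop_nhds_zero_nat
        have := (h0.mul_const (y i - w i)).const_add (w i)
        simpa using this
      refine mem_closure_of_tendsto htend (Filter.Eventually.of_forall fun k => ?_)
      refine hmem _ (by positivity) ?_
      rw [div_le_one (by positivity)]
      linarith [Nat.cast_nonneg (α := ℝ) k]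
end

section
/- Let A be an n×n pairwise comparison matrix (n ≥ 3) and w a positive weight vector. If SD(w) is nonempty, then SD(w) equals the interior of D(w), and the closure of SD(w) equals the closure of D(w). -/
private lemma ratio_key (a c ui uj vi vj t : ℝ) (huj : 0 < uj) (hvj : 0 < vj)
    (ht0 : 0 < t) (ht1 : t < 1)
    (hu : |a - ui / uj| ≤ c) (hv : |a - vi / vj| < c) :
    |a - ((1 - t) * ui + t * vi) / ((1 - t) * uj + t * vj)| < c := by
  have h1t : (0:ℝ) < 1 - t := by linarith
  have hdj : 0 < (1 - t) * uj + t * vj := by positivity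
  set μ : ℝ := (1 - t) * uj / ((1 - t) * uj + t * vj) with hμdef
  have hμ0 : 0 < μ := by positivity
  have hμ1 : μ < 1 := by
    rw [hμdef, div_lt_one hdj]; nlinarith
  have hid : a - ((1 - t) * ui + t * vi) / ((1 - t) * uj + t * vj)
      = μ * (a - ui / uj) + (1 - μ) * (a - vi / vj) := by
    rw [hμdef]; field_simp; ring
  rw [hid]
  calc |μ * (a - ui / uj) + (1 - μ) * (a - vi / vj)|
      ≤ |μ * (a - ui / uj)| + |(1 - μ) * (a - vi / vj)| := abs_add_le _ _
    _ = μ * |a - ui / uj| + (1 - μ) * |a - vi / vj| := by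
        rw [abs_mul, abs_mul, abs_of_pos hμ0, abs_of_pos (show (0:ℝ) < 1 - μ by linarith)]
    _ < c := by nlinarith [mul_le_mul_of_nonneg_left hu hμ0.le,
        mul_lt_mul_of_pos_left hv (by linarith : (0:ℝ) < 1 - μ)]

/-- If `SD(w)` is nonempty, then `SD(w) = interior (D(w))` and
`closure (SD(w)) = closure (D(w))`. -/
theorem strongly_dominating_interior_closure
    {n : ℕ} (hn : 3 ≤ n) (A : Matrix (Fin n) (Fin n) ℝ)
    (hApos : ∀ i j, 0 < A i j) (hArec : ∀ i j, A i j = (A j i)⁻¹)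
    (w : Fin n → ℝ) (hw : ∀ i, 0 < w i) :
    let Dw : Set (Fin n → ℝ) :=
      {x | (∀ i, 0 < x i) ∧
        (∀ i j, i ≠ j → |A i j - x i / x j| ≤ |A i j - w i / w j|) ∧
        (∃ k l, k ≠ l ∧ |A k l - x k / x l| < |A k l - w k / w l|)}
    let SDw : Set (Fin n → ℝ) :=
      {x | (∀ i, 0 < x i) ∧
        (∀ i j, i ≠ j → |A i j - x i / x j| < |A i j - w i / w j|)}
    SDw.Nonempty → SDw = interior Dw ∧ closure SDw = closure Dw := by
  intro Dw SDw hne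
  obtain ⟨y, hy⟩ := hne
  obtain ⟨hy0, hySD⟩ : (∀ i, 0 < y i) ∧
      (∀ i j, i ≠ j → |A i j - y i / y j| < |A i j - w i / w j|) := hy
  -- indices 0 ≠ 1
  have h01 : (⟨0, by omega⟩ : Fin n) ≠ (⟨1, by omega⟩ : Fin n) := by
    simp [Fin.ext_iff]
  -- SD ⊆ D
  have hSDsubD : SDw ⊆ Dw := by
    rintro x ⟨hx0, hx⟩
    exact ⟨hx0, fun i j hij => (hx i j hij).le,
      ⟨⟨0, by omega⟩, ⟨1, by omega⟩, h01, hx _ _ h01⟩⟩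
  -- positivity set is open
  have hP : IsOpen {x : Fin n → ℝ | ∀ i, 0 < x i} := by
    have h : {x : Fin n → ℝ | ∀ i, 0 < x i} = ⋂ i, {x | 0 < x i} := by
      ext x; simp
    rw [h]
    exact isOpen_iInter_of_finite fun i =>
      isOpen_lt continuous_const (continuous_apply i)
  -- SD is open
  have hSDopen : IsOpen SDw := by
    have h : SDw = ⋂ p : Fin n × Fin n,
        ({x : Fin n → ℝ | ∀ i, 0 < x i} ∩
          {x | p.1 ≠ p.2 → |A p.1 p.2 - x p.1 / x p.2| < |A p.1 p.2 - w p.1 / w p.2|}) := by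
      ext x
      constructor
      · rintro ⟨h1, h2⟩
        exact Set.mem_iInter.2 fun p => ⟨h1, fun hne => h2 p.1 p.2 hne⟩
      · intro hx
        have hx' := Set.mem_iInter.1 hx
        exact ⟨(hx' (⟨0, by omega⟩, ⟨0, by omega⟩)).1,
          fun i j hij => (hx' (i, j)).2 hij⟩
    rw [h]
    refine isOpen_iInter_of_finite fun p => ?_
    by_cases hpq : p.1 = p.2
    · have : {x : Fin n → ℝ | p.1 ≠ p.2 →
          |A p.1 p.2 - x p.1 / x p.2| < |A p.1 p.2 - w p.1 / w p.2|} = Set.univ := by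
        ext x; simp [hpq]
      rw [this, Set.inter_univ]; exact hP
    · have hco : ContinuousOn (fun x : Fin n → ℝ => |A p.1 p.2 - x p.1 / x p.2|)
          {x : Fin n → ℝ | ∀ i, 0 < x i} := by
        refine (continuousOn_const.sub ?_).abs
        exact ((continuous_apply p.1).continuousOn).div
          ((continuous_apply p.2).continuousOn) (fun x hx => (hx p.2).ne')
      have := hco.isOpen_inter_preimage hP
        (isOpen_Iio (a := |A p.1 p.2 - w p.1 / w p.2|))
      convert this using 1
      ext x
      simp only [Set.mem_inter_iff, Set.mem_setOf_eq, Set.mem_preimage, Set.mem_Iio]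
      exact ⟨fun ⟨h1, h2⟩ => ⟨h1, h2 hpq⟩, fun ⟨h1, h2⟩ => ⟨h1, fun _ => h2⟩⟩
  -- interior Dw = SDw
  have hint : SDw = interior Dw := by
    apply Set.Subset.antisymm (interior_maximal hSDsubD hSDopen)
    intro x hx
    have hxD : x ∈ Dw := interior_subset hx
    obtain ⟨hx0, hxle, -⟩ : (∀ i, 0 < x i) ∧
        (∀ i j, i ≠ j → |A i j - x i / x j| ≤ |A i j - w i / w j|) ∧
        (∃ k l, k ≠ l ∧ |A k l - x k / x l| < |A k l - w k / w l|) := hxD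
    -- find s > 0 with z s ∈ Dw where z s = x + s(x - y)
    have hcont : ContinuousAt (fun s : ℝ => fun i => x i + s * (x i - y i)) 0 :=
      (continuous_pi fun i => continuous_const.add (continuous_id.mul continuous_const)).continuousAt
    have hval : (fun i => x i + (0:ℝ) * (x i - y i)) = x := by funext i; ring
    have hnhds : interior Dw ∈ nhds ((fun s : ℝ => fun i => x i + s * (x i - y i)) 0) := by
      simpa [hval] using isOpen_interior.mem_nhds hx
    have hpre := hcont.preimage_mem_nhds hnhds
    obtain ⟨ε, hε, hball⟩ := Metric.mem_nhds_iff.1 hpre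
    set s : ℝ := ε / 2 with hsdef
    have hs0 : 0 < s := by positivity
    have hzmem : (fun i => x i + s * (x i - y i)) ∈ interior Dw := by
      apply hball
      simp only [Metric.mem_ball, Real.dist_eq, hsdef]
      rw [sub_zero, abs_of_pos (by positivity)]
      linarith
    have hzD : (fun i => x i + s * (x i - y i)) ∈ Dw := interior_subset hzmem
    obtain ⟨hz0, hzle, -⟩ : (∀ i, 0 < (fun i => x i + s * (x i - y i)) i) ∧
        (∀ i j, i ≠ j → |A i j - (fun i => x i + s * (x i - y i)) i /
            (fun i => x i + s * (x i - y i)) j| ≤ |A i j - w i / w j|) ∧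
        (∃ k l, k ≠ l ∧ |A k l - (fun i => x i + s * (x i - y i)) k /
            (fun i => x i + s * (x i - y i)) l| < |A k l - w k / w l|) := hzD
    refine ⟨hx0, fun i j hij => ?_⟩
    set t : ℝ := s / (1 + s) with htdef
    have ht0 : 0 < t := by positivity
    have ht1 : t < 1 := by
      rw [htdef, div_lt_one (by linarith)]; linarith
    have hxi : ∀ k, x k = (1 - t) * (x k + s * (x k - y k)) + t * y k := by
      intro k
      rw [htdef]
      field_simp
      ring
    calc |A i j - x i / x j|
        = |A i j - ((1 - t) * (x i + s * (x i - y i)) + t * y i) /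
            ((1 - t) * (x j + s * (x j - y j)) + t * y j)| := by
          rw [← hxi i, ← hxi j]
      _ < |A i j - w i / w j| :=
          ratio_key _ _ _ _ _ _ _ (hz0 j) (hy0 j) ht0 ht1 (hzle i j hij) (hySD i j hij)
  refine ⟨hint, ?_⟩
  -- closure SDw = closure Dw
  apply Set.Subset.antisymm (closure_mono hSDsubD)
  have hD : Dw ⊆ closure SDw := by
    rintro x ⟨hx0, hxle, -⟩
    have key : ∀ t ∈ Set.Ioo (0:ℝ) 1, (fun i => (1 - t) * x i + t * y i) ∈ SDw := by
      intro t ht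
      refine ⟨fun i => by dsimp only; nlinarith [hx0 i, hy0 i, ht.1, ht.2], fun i j hij => ?_⟩
      exact ratio_key _ _ _ _ _ _ _ (hx0 j) (hy0 j) ht.1 ht.2 (hxle i j hij) (hySD i j hij)
    have hcont : Continuous (fun t : ℝ => fun i => (1 - t) * x i + t * y i) :=
      continuous_pi fun i =>
        ((continuous_const.sub continuous_id).mul continuous_const).add
          (continuous_id.mul continuous_const)
    have hval : (fun i => (1 - (0:ℝ)) * x i + 0 * y i) = x := by funext i; ring
    have htend : Filter.Tendsto (fun t : ℝ => fun i => (1 - t) * x i + t * y i)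
        (nhdsWithin 0 (Set.Ioi 0)) (nhds x) := by
      have h0 := (hcont.tendsto 0).mono_left
        (nhdsWithin_le_nhds (s := Set.Ioi (0:ℝ)))
      simpa [hval] using h0
    refine mem_closure_of_tendsto htend ?_
    filter_upwards [Ioo_mem_nhdsGT_of_mem (by norm_num : (0:ℝ) ∈ Set.Ico 0 1)] with t ht
    exact key t ht
  calc closure Dw ⊆ closure (closure SDw) := closure_mono hD
    _ = closure SDw := closure_closure
end

section
/- Let A be an n×n pairwise comparison matrix (n ≥ 3) and w a positive weight vector. Then w is weakly efficient for A if and only if w is locally weakly efficient, i.e., if and only if there exists an open neighborhood U of w in ℝ^n such that no positive vector w′ ∈ U satisfies |a_ij − w′_i/w′_j| < |a_ij − w_i/w_j| for all i ≠ j. -/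
lemma between_dominates {a r r' x : ℝ} (h : |a - r'| < |a - r|)
    (hx : r < x ∧ x < r' ∨ r' < x ∧ x < r) : |a - x| < |a - r| := by
  rcases hx with ⟨h1, h2⟩ | ⟨h1, h2⟩ <;>
    rcases abs_cases (a - r') with ⟨e1, s1⟩ | ⟨e1, s1⟩ <;>
    rcases abs_cases (a - r) with ⟨e2, s2⟩ | ⟨e2, s2⟩ <;>
    rcases abs_cases (a - x) with ⟨e3, s3⟩ | ⟨e3, s3⟩ <;>
    linarith

lemma geo_between {r r' t : ℝ} (hr : 0 < r) (hr' : 0 < r') (hne : r ≠ r')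
    (ht0 : 0 < t) (ht1 : t < 1) :
    r < r ^ (1 - t) * r' ^ t ∧ r ^ (1 - t) * r' ^ t < r' ∨
    r' < r ^ (1 - t) * r' ^ t ∧ r ^ (1 - t) * r' ^ t < r := by
  have hrr : r ^ (1 - t) * r ^ t = r := by
    rw [← Real.rpow_add hr]; norm_num
  have hrr' : r' ^ (1 - t) * r' ^ t = r' := by
    rw [← Real.rpow_add hr']; norm_num
  rcases lt_or_gt_of_ne hne with hlt | hlt
  · left
    constructor
    · calc r = r ^ (1 - t) * r ^ t := hrr.symm
        _ < r ^ (1 - t) * r' ^ t :=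
          mul_lt_mul_of_pos_left (Real.rpow_lt_rpow hr.le hlt ht0)
            (Real.rpow_pos_of_pos hr _)
    · calc r ^ (1 - t) * r' ^ t < r' ^ (1 - t) * r' ^ t :=
          mul_lt_mul_of_pos_right (Real.rpow_lt_rpow hr.le hlt (by linarith))
            (Real.rpow_pos_of_pos hr' _)
        _ = r' := hrr'
  · right
    constructor
    · calc r' = r' ^ (1 - t) * r' ^ t := hrr'.symm
        _ < r ^ (1 - t) * r' ^ t :=
          mul_lt_mul_of_pos_right (Real.rpow_lt_rpow hr'.le hlt (by linarith))
            (Real.rpow_pos_of_pos hr' _)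
    · calc r ^ (1 - t) * r' ^ t < r ^ (1 - t) * r ^ t :=
          mul_lt_mul_of_pos_left (Real.rpow_lt_rpow hr'.le hlt ht0)
            (Real.rpow_pos_of_pos hr _)
        _ = r := hrr

/-- `w` is weakly efficient iff it is locally weakly efficient. -/
theorem weak_efficiency_iff_local_weak_efficiency
    {n : ℕ} (hn : 3 ≤ n) (A : Matrix (Fin n) (Fin n) ℝ)
    (hApos : ∀ i j, 0 < A i j) (hArec : ∀ i j, A i j = (A j i)⁻¹)
    (w : Fin n → ℝ) (hw : ∀ i, 0 < w i) :
    (¬ ∃ w' : Fin n → ℝ, (∀ i, 0 < w' i) ∧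
        (∀ i j, i ≠ j → |A i j - w' i / w' j| < |A i j - w i / w j|)) ↔
    (∃ U : Set (Fin n → ℝ), IsOpen U ∧ w ∈ U ∧
      ¬ ∃ w' : Fin n → ℝ, w' ∈ U ∧ (∀ i, 0 < w' i) ∧
        (∀ i j, i ≠ j → |A i j - w' i / w' j| < |A i j - w i / w j|)) := by
  constructor
  · intro h
    exact ⟨Set.univ, isOpen_univ, trivial,
      fun ⟨w', _, hp, hd⟩ => h ⟨w', hp, hd⟩⟩
  · rintro ⟨U, hU, hwU, hloc⟩ ⟨w', hw'pos, hdom⟩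
    set f : ℝ → (Fin n → ℝ) :=
      fun t i => Real.exp ((1 - t) * Real.log (w i) + t * Real.log (w' i)) with hf
    have hf0 : f 0 = w := by
      funext i
      simp [hf, Real.exp_log (hw i)]
    have hcont : Continuous f := by
      apply continuous_pi
      intro i
      exact Real.continuous_exp.comp (((continuous_const.sub continuous_id).mul continuous_const).add (continuous_id.mul continuous_const))
    have htend : Filter.Tendsto f (nhdsWithin 0 (Set.Ioi 0)) (nhds w) := by
      have := hcont.continuousAt (x := (0:ℝ))
      rw [ContinuousAt, hf0] at this
      exact this.mono_left nhdsWithin_le_nhds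
    have hevU : ∀ᶠ t in nhdsWithin 0 (Set.Ioi 0), f t ∈ U :=
      htend.eventually_mem (hU.mem_nhds hwU)
    have hIoo : ∀ᶠ t in nhdsWithin 0 (Set.Ioi 0), t ∈ Set.Ioo (0:ℝ) 1 :=
      Filter.eventually_of_mem
        (Ioo_mem_nhdsGT_of_mem (by constructor <;> norm_num)) (fun _ h => h)
    obtain ⟨t, htU, ht0, ht1⟩ := (hevU.and hIoo).exists
    apply hloc
    refine ⟨f t, htU, fun i => Real.exp_pos _, fun i j hij => ?_⟩
    have hd := hdom i j hij
    set r := w i / w j with hr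
    set r' := w' i / w' j with hr'
    have hrpos : 0 < r := div_pos (hw i) (hw j)
    have hr'pos : 0 < r' := div_pos (hw'pos i) (hw'pos j)
    have hratio : f t i / f t j = r ^ (1 - t) * r' ^ t := by
      rw [hf]
      simp only
      rw [← Real.exp_sub, Real.rpow_def_of_pos hrpos, Real.rpow_def_of_pos hr'pos,
        ← Real.exp_add, hr, hr', Real.log_div (hw i).ne' (hw j).ne',
        Real.log_div (hw'pos i).ne' (hw'pos j).ne']
      ring_nf
    rw [hratio]
    have hne : r ≠ r' := by
      intro h
      rw [h] at hd
      exact lt_irrefl _ hd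
    exact between_dominates hd (geo_between hrpos hr'pos hne ht0 ht1)
end

section
/- Let A be an n×n pairwise comparison matrix (n ≥ 3) and w a positive weight vector. Then w is weakly efficient for A if and only if w is internally weakly efficient, i.e., if and only if there exists no positive weight vector w′ such that for all i ≠ j: a_ij ≤ w_i/w_j implies a_ij ≤ w′_i/w′_j < w_i/w_j, and a_ij ≥ w_i/w_j implies a_ij ≥ w′_i/w′_j > w_i/w_j. -/
/-- `w` is weakly efficient iff it is internally weakly efficient. -/
theorem weak_efficiency_iff_internal_weak_efficiency
    {n : ℕ} (hn : 3 ≤ n) (A : Matrix (Fin n) (Fin n) ℝ)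
    (hApos : ∀ i j, 0 < A i j) (hArec : ∀ i j, A i j = (A j i)⁻¹)
    (w : Fin n → ℝ) (hw : ∀ i, 0 < w i) :
    (¬ ∃ w' : Fin n → ℝ, (∀ i, 0 < w' i) ∧
        (∀ i j, i ≠ j → |A i j - w' i / w' j| < |A i j - w i / w j|)) ↔
    (¬ ∃ w' : Fin n → ℝ, (∀ i, 0 < w' i) ∧
        (∀ i j, i ≠ j →
          (A i j ≤ w i / w j → A i j ≤ w' i / w' j ∧ w' i / w' j < w i / w j) ∧
          (A i j ≥ w i / w j → A i j ≥ w' i / w' j ∧ w' i / w' j > w i / w j))) := by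
  haveI : NeZero n := ⟨by omega⟩
  apply not_congr
  constructor
  · -- strict improvement ⇒ internal improvement
    rintro ⟨w', hw', hlt⟩
    -- choose a small step size t
    set ε : Fin n → Fin n → ℝ := fun i j =>
      if i = j then 1 else
        |A i j - w i / w j| * min (w j) (w' j) * w j /
          (|w' i * w j - w i * w' j| + 1) with hε
    have hεpos : ∀ i j, 0 < ε i j := by
      intro i j
      by_cases h : i = j
      · simp [hε, h]
      · have hK : 0 < |A i j - w i / w j| := by
          have := hlt i j h
          have := abs_nonneg (A i j - w' i / w' j)
          linarith
        have hm : 0 < min (w j) (w' j) := lt_min (hw j) (hw' j)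
        have : 0 < |w' i * w j - w i * w' j| + 1 := by positivity
        simp only [hε, if_neg h]
        exact div_pos (mul_pos (mul_pos hK hm) (hw j)) this
    set t : ℝ := min 1 (Finset.univ.inf' (Finset.univ_nonempty)
      (fun p : Fin n × Fin n => ε p.1 p.2)) with htdef
    have ht0 : 0 < t := by
      apply lt_min one_pos
      apply (Finset.lt_inf'_iff _).mpr
      intro p _
      exact hεpos p.1 p.2
    have ht1 : t ≤ 1 := min_le_left _ _
    have htε : ∀ i j, t ≤ ε i j := by
      intro i j
      exact le_trans (min_le_right _ _)
        (Finset.inf'_le _ (Finset.mem_univ ((i, j) : Fin n × Fin n)))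
    set v : Fin n → ℝ := fun i => (1 - t) * w i + t * w' i with hv
    have hvpos : ∀ i, 0 < v i := by
      intro i
      have h1 : 0 ≤ (1 - t) * w i := mul_nonneg (by linarith) (hw i).le
      have h2 : 0 < t * w' i := mul_pos ht0 (hw' i)
      simp only [hv]; linarith
    refine ⟨v, hvpos, ?_⟩
    intro i j hij
    set C : ℝ := w' i * w j - w i * w' j with hC
    have hwj := hw j
    have hwi := hw i
    have hw'j := hw' j
    have hw'i := hw' i
    have h1 : v i / v j - w i / w j = t * C / (v j * w j) := by
      have := (hvpos j).ne'
      field_simp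
      simp only [hv]
      ring
    have h2 : w' i / w' j - w i / w j = C / (w' j * w j) := by
      field_simp
      ring
    have hK : 0 < |A i j - w i / w j| := by
      have := hlt i j hij
      have := abs_nonneg (A i j - w' i / w' j)
      linarith
    have hmle : min (w j) (w' j) ≤ v j := by
      have h1 : min (w j) (w' j) ≤ w j := min_le_left _ _
      have h2 : min (w j) (w' j) ≤ w' j := min_le_right _ _
      have : (1 - t) * min (w j) (w' j) ≤ (1 - t) * w j :=
        mul_le_mul_of_nonneg_left h1 (by linarith)
      have : t * min (w j) (w' j) ≤ t * w' j :=
        mul_le_mul_of_nonneg_left h2 ht0.le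
      simp only [hv]; nlinarith
    have hmpos : 0 < min (w j) (w' j) := lt_min hwj hw'j
    -- the key bound
    have hbound : |v i / v j - w i / w j| < |A i j - w i / w j| := by
      rw [h1, abs_div, abs_mul, abs_of_pos ht0, abs_of_pos (mul_pos (hvpos j) hwj)]
      rw [div_lt_iff₀ (mul_pos (hvpos j) hwj)]
      have htε' : t ≤ |A i j - w i / w j| * min (w j) (w' j) * w j /
          (|C| + 1) := by
        have := htε i j
        simpa [hε, if_neg hij, hC] using this
      have hCpos : (0:ℝ) < |C| + 1 := by positivity
      rw [le_div_iff₀ hCpos] at htε'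
      have hCnn : 0 ≤ |C| := abs_nonneg _
      nlinarith [mul_pos hK hwj, mul_le_mul_of_nonneg_left hmle (mul_pos hK hwj).le]
    have habs := abs_lt.mp hbound
    rcases lt_or_gt_of_ne (fun h : A i j = w i / w j => by simp [h] at hK) with hA | hA
    · -- A i j < w i / w j
      have hw'lt : w' i / w' j < w i / w j := by
        have h3 := hlt i j hij
        have h4 : w' i / w' j - A i j ≤ |A i j - w' i / w' j| := by
          rw [abs_sub_comm]; exact le_abs_self _
        rw [abs_of_neg (by linarith : A i j - w i / w j < 0)] at h3
        linarith
      have hCneg : C < 0 := by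
        have : C / (w' j * w j) < 0 := by rw [← h2]; linarith
        by_contra h
        push_neg at h
        have : 0 ≤ C / (w' j * w j) := div_nonneg h (mul_pos hw'j hwj).le
        linarith
      have hvlt : v i / v j < w i / w j := by
        have : t * C / (v j * w j) < 0 :=
          div_neg_of_neg_of_pos (mul_neg_of_pos_of_neg ht0 hCneg)
            (mul_pos (hvpos j) hwj)
        linarith [h1]
      have hAle : A i j < v i / v j := by
        rw [abs_of_neg (by linarith : A i j - w i / w j < 0)] at habs
        linarith [habs.1]
      constructor
      · intro _; exact ⟨hAle.le, hvlt⟩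
      · intro h; exact absurd h (not_le.mpr hA)
    · -- A i j > w i / w j
      have hw'gt : w' i / w' j > w i / w j := by
        have h3 := hlt i j hij
        have h4 : A i j - w' i / w' j ≤ |A i j - w' i / w' j| := le_abs_self _
        rw [abs_of_pos (by linarith : 0 < A i j - w i / w j)] at h3
        linarith
      have hCpos : 0 < C := by
        have : 0 < C / (w' j * w j) := by rw [← h2]; linarith
        by_contra h
        push_neg at h
        have : C / (w' j * w j) ≤ 0 := div_nonpos_of_nonpos_of_nonneg h (mul_pos hw'j hwj).le
        linarith
      have hvgt : w i / w j < v i / v j := by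
        have : 0 < t * C / (v j * w j) :=
          div_pos (mul_pos ht0 hCpos) (mul_pos (hvpos j) hwj)
        linarith [h1]
      have hAge : v i / v j < A i j := by
        rw [abs_of_pos (by linarith : 0 < A i j - w i / w j)] at habs
        linarith [habs.2]
      constructor
      · intro h; exact absurd h (not_le.mpr hA)
      · intro _; exact ⟨hAge.le, hvgt⟩
  · -- internal improvement ⇒ strict improvement
    rintro ⟨w', hw', hint⟩
    refine ⟨w', hw', ?_⟩
    intro i j hij
    obtain ⟨h1, h2⟩ := hint i j hij
    rcases le_total (A i j) (w i / w j) with hle | hge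
    · obtain ⟨ha, hb⟩ := h1 hle
      rw [abs_of_nonpos (by linarith), abs_of_nonpos (by linarith)]
      linarith
    · obtain ⟨ha, hb⟩ := h2 hge
      rw [abs_of_nonneg (by linarith), abs_of_nonneg (by linarith)]
      linarith
end

section
/- Let A be an n×n pairwise comparison matrix (n ≥ 3) and w a positive weight vector. Then w is strongly inefficient for A if and only if there exists a permutation σ of {1,…,n} such that w_{σ(i)}/w_{σ(j)} > a_{σ(i)σ(j)} for all 1 ≤ i < j ≤ n (equivalently, the directed graph with vertex set {1,…,n} and arcs i → j whenever i ≠ j and w_i/w_j ≥ a_ij is isomorphic to the acyclic tournament on n vertices). -/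
/-- `w` is strongly inefficient iff after a permutation the associated
digraph is the acyclic tournament: `w σi / w σj > A σi σj` for all `i < j`. -/
theorem strongly_inefficient_iff_acyclic_tournament
    {n : ℕ} (hn : 3 ≤ n) (A : Matrix (Fin n) (Fin n) ℝ)
    (hApos : ∀ i j, 0 < A i j) (hArec : ∀ i j, A i j = (A j i)⁻¹)
    (w : Fin n → ℝ) (hw : ∀ i, 0 < w i) :
    (∃ w' : Fin n → ℝ, (∀ i, 0 < w' i) ∧
        (∀ i j, i ≠ j → |A i j - w' i / w' j| < |A i j - w i / w j|)) ↔
    (∃ σ : Equiv.Perm (Fin n), ∀ i j : Fin n, i < j →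
        A (σ i) (σ j) < w (σ i) / w (σ j)) := by
  have hA1 : ∀ i : Fin n, A i i = 1 := by
    intro i
    have h := hArec i i
    have hp := hApos i i
    have h2 : A i i * A i i = 1 := by
      field_simp at h
      linarith [h]
    nlinarith
  constructor
  · rintro ⟨w', hw', himp⟩
    set P : Fin n → Fin n → Prop := fun i j => A i j < w i / w j with hPdef
    have hPirr : ∀ i, ¬ P i i := by
      intro i hPi
      simp only [hPdef] at hPi
      rw [hA1 i, div_self (hw i).ne'] at hPi
      exact lt_irrefl 1 hPi
    have hasym : ∀ i j, P i j → P j i → False := by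
      intro i j h1 h2
      simp only [hPdef] at h1 h2
      rw [hArec j i] at h2
      have hwp : 0 < w i / w j := div_pos (hw i) (hw j)
      have hinv : (w i / w j)⁻¹ < (A i j)⁻¹ := by
        gcongr
        exact hApos i j
      rw [inv_div] at hinv
      linarith
    have htot : ∀ i j, i ≠ j → P i j ∨ P j i := by
      intro i j hij
      rcases lt_trichotomy (A i j) (w i / w j) with h | h | h
      · exact Or.inl h
      · exfalso
        have := himp i j hij
        rw [h, sub_self, abs_zero] at this
        exact absurd this (abs_nonneg _).not_gt
      · right
        show A j i < w j / w i
        rw [hArec j i, ← inv_div (w i) (w j)]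
        gcongr
        exact div_pos (hw i) (hw j)
    have hdec : ∀ i j, P i j → w' i / w' j < w i / w j := by
      intro i j h
      have hij : i ≠ j := by rintro rfl; exact hPirr i h
      have h2 := himp i j hij
      simp only [hPdef] at h
      rw [abs_of_neg (by linarith : A i j - w i / w j < 0)] at h2
      have := (abs_lt.mp h2).1
      linarith
    have htrans : ∀ i j k, P i j → P j k → P i k := by
      intro i j k h1 h2
      have hik : i ≠ k := by
        rintro rfl
        exact hasym i j h1 h2
      rcases htot i k hik with h | h
      · exact h
      · exfalso
        have d1 := hdec i j h1
        have d2 := hdec j k h2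
        have d3 := hdec k i h
        have p1 : (w i / w j) * (w j / w k) * (w k / w i) = 1 := by
          have e1 := (hw i).ne'
          have e2 := (hw j).ne'
          have e3 := (hw k).ne'
          field_simp
        have p2 : (w' i / w' j) * (w' j / w' k) * (w' k / w' i) = 1 := by
          have e1 := (hw' i).ne'
          have e2 := (hw' j).ne'
          have e3 := (hw' k).ne'
          field_simp
        have q1 : 0 ≤ w' i / w' j := (div_pos (hw' i) (hw' j)).le
        have q2 : 0 ≤ w' j / w' k := (div_pos (hw' j) (hw' k)).le
        have q3 : 0 ≤ w' k / w' i := (div_pos (hw' k) (hw' i)).le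
        have m1 : (w' i / w' j) * (w' j / w' k) < (w i / w j) * (w j / w k) :=
          mul_lt_mul'' d1 d2 q1 q2
        have m2 : (w' i / w' j) * (w' j / w' k) * (w' k / w' i)
            < (w i / w j) * (w j / w k) * (w k / w i) :=
          mul_lt_mul'' m1 d3 (mul_nonneg q1 q2) q3
        rw [p1, p2] at m2
        exact lt_irrefl 1 m2
    -- build the sorted permutation
    set r : Fin n → Fin n → Prop := fun i j => P i j ∨ i = j with hrdef
    letI : DecidableRel r := fun a b => Classical.dec _
    haveI : IsTrans (Fin n) r := by
      constructor
      rintro a b c (h1 | rfl) (h2 | rfl)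
      · exact Or.inl (htrans a b c h1 h2)
      · exact Or.inl h1
      · exact Or.inl h2
      · exact Or.inr rfl
    haveI : IsAntisymm (Fin n) r := by
      constructor
      rintro a b (h1 | rfl) (h2 | h2)
      · exact absurd (hasym a b h1 h2) id
      · exact h2.symm
      · rfl
      · rfl
    haveI : IsTotal (Fin n) r := by
      constructor
      intro a b
      rcases eq_or_ne a b with rfl | hab
      · exact Or.inl (Or.inr rfl)
      · rcases htot a b hab with h | h
        · exact Or.inl (Or.inl h)
        · exact Or.inr (Or.inl h)
    set l : List (Fin n) := Finset.sort Finset.univ r with hldef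
    have hlen : l.length = n := by
      rw [hldef, Finset.length_sort, Finset.card_univ, Fintype.card_fin]
    have hnodup : l.Nodup := Finset.sort_nodup Finset.univ r
    have hsorted : List.Pairwise r l := Finset.pairwise_sort Finset.univ r
    set f : Fin n → Fin n := fun i => l.get (Fin.cast hlen.symm i) with hfdef
    have hfinj : Function.Injective f := by
      intro a b hab
      have := List.nodup_iff_injective_get.mp hnodup hab
      exact Fin.cast_injective _ this
    have hfbij : Function.Bijective f := (Finite.injective_iff_bijective).mp hfinj
    refine ⟨Equiv.ofBijective f hfbij, ?_⟩
    intro i j hij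
    have hr : r (f i) (f j) := by
      have hp := List.pairwise_iff_get.mp hsorted (Fin.cast hlen.symm i) (Fin.cast hlen.symm j) ?_
      · exact hp
      · rw [Fin.lt_def]
        simp only [Fin.coe_cast]
        exact hij
    have hne : f i ≠ f j := fun h => (Fin.lt_iff_le_and_ne.mp hij).2 (hfinj h)
    rcases hr with h | h
    · exact h
    · exact absurd h hne
  · rintro ⟨σ, hσ⟩
    set S : Finset (Fin n × Fin n) := Finset.univ.filter (fun p => p.1 < p.2) with hSdef
    have hSne : S.Nonempty := by
      refine ⟨(⟨0, by omega⟩, ⟨1, by omega⟩), Finset.mem_filter.mpr ⟨Finset.mem_univ _, ?_⟩⟩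
      simp [Fin.lt_def]
    set g : Fin n × Fin n → ℝ := fun p => w (σ p.1) / w (σ p.2) / A (σ p.1) (σ p.2) with hgdef
    set M : ℝ := S.inf' hSne g with hMdef
    have hM1 : 1 < M := by
      rw [hMdef, Finset.lt_inf'_iff]
      intro p hp
      have hplt : p.1 < p.2 := (Finset.mem_filter.mp hp).2
      have := hσ p.1 p.2 hplt
      rw [hgdef]
      rw [one_lt_div (hApos (σ p.1) (σ p.2))]
      exact this
    have hM0 : 0 < M := by linarith
    have hMle : ∀ a b : Fin n, a < b → M ≤ w (σ a) / w (σ b) / A (σ a) (σ b) := by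
      intro a b hab
      have hmem : (a, b) ∈ S := Finset.mem_filter.mpr ⟨Finset.mem_univ _, hab⟩
      exact Finset.inf'_le g hmem
    set t : ℝ := M ^ ((n : ℝ)⁻¹) with htdef
    have hn0 : (0:ℝ) < (n : ℝ)⁻¹ := by
      rw [inv_pos]; exact_mod_cast by omega
    have ht1 : 1 < t := by
      rw [htdef]
      exact (Real.one_lt_rpow_iff_of_pos hM0).mpr (Or.inl ⟨hM1, hn0⟩)
    have ht0 : 0 < t := by linarith
    have htn : t ^ n = M := by
      rw [htdef, ← Real.rpow_natCast (M ^ ((n:ℝ)⁻¹)) n, ← Real.rpow_mul hM0.le,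
        inv_mul_cancel₀ (by exact_mod_cast by omega : (n:ℝ) ≠ 0), Real.rpow_one]
    set w' : Fin n → ℝ := fun k => w k * t ^ (σ.symm k : ℕ) with hw'def
    have hw'pos : ∀ k, 0 < w' k := by
      intro k
      rw [hw'def]
      exact mul_pos (hw k) (pow_pos ht0 _)
    have key : ∀ a b : Fin n, a < b →
        A (σ a) (σ b) < w' (σ a) / w' (σ b) ∧ w' (σ a) / w' (σ b) < w (σ a) / w (σ b) := by
      intro a b hab
      have habn : (a : ℕ) < (b : ℕ) := hab
      set d : ℕ := (b : ℕ) - (a : ℕ) with hddef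
      have hd0 : d ≠ 0 := by omega
      have hratio : w' (σ a) / w' (σ b) = (w (σ a) / w (σ b)) / t ^ d := by
        simp only [hw'def, Equiv.symm_apply_apply]
        have hb : (b : ℕ) = (a : ℕ) + d := by omega
        rw [mul_div_mul_comm, hb, pow_add,
          div_mul_cancel_left₀ (pow_ne_zero _ ht0.ne')]
        ring
      have hdn : d < n := by have := b.isLt; omega
      have htd1 : 1 < t ^ d := one_lt_pow₀ ht1 hd0
      have htdM : t ^ d < M := by
        calc t ^ d < t ^ n := pow_lt_pow_right₀ ht1 hdn
        _ = M := htn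
      have hAab := hApos (σ a) (σ b)
      constructor
      · rw [hratio, lt_div_iff₀ (pow_pos ht0 d)]
        have hle := hMle a b hab
        have h3 : t ^ d < w (σ a) / w (σ b) / A (σ a) (σ b) := lt_of_lt_of_le htdM hle
        rw [lt_div_iff₀ hAab] at h3
        linarith
      · rw [hratio]
        exact div_lt_self (div_pos (hw _) (hw _)) htd1
    refine ⟨w', hw'pos, ?_⟩
    intro i j hij
    set a : Fin n := σ.symm i with hadef
    set b : Fin n := σ.symm j with hbdef
    have hai : σ a = i := σ.apply_symm_apply i
    have hbj : σ b = j := σ.apply_symm_apply j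
    have hab : a ≠ b := by
      rintro h
      exact hij (by rw [← hai, ← hbj, h])
    rcases hab.lt_or_gt with h | h
    · obtain ⟨h1, h2⟩ := key a b h
      rw [hai, hbj] at h1 h2
      rw [abs_of_neg (by linarith), abs_of_neg (by linarith)]
      linarith
    · obtain ⟨h1, h2⟩ := key b a h
      rw [hai, hbj] at h1 h2
      have e1 : A i j = (A j i)⁻¹ := hArec i j
      have e2 : w i / w j = (w j / w i)⁻¹ := (inv_div (w j) (w i)).symm
      have e3 : w' i / w' j = (w' j / w' i)⁻¹ := (inv_div (w' j) (w' i)).symm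
      have hAji := hApos j i
      have hy : (w' j / w' i)⁻¹ < (A j i)⁻¹ := by
        gcongr
      have hx : (w j / w i)⁻¹ < (w' j / w' i)⁻¹ := by
        gcongr
        exact div_pos (hw'pos j) (hw'pos i)
      rw [e1, e2, e3]
      rw [abs_of_pos (by linarith), abs_of_pos (by linarith)]
      linarith
end

section
/- Let A be an n×n pairwise comparison matrix (n ≥ 3) and w a positive weight vector. If there exist three distinct indices i, j, k with w_i/w_j > a_ij, w_j/w_k > a_jk, and w_k/w_i > a_ki (i.e., the associated directed graph contains a directed 3-cycle of strict arcs), then w is weakly efficient for A; that is, no positive vector w′ satisfies |a_pq − w′_p/w′_q| < |a_pq − w_p/w_q| for all p ≠ q. -/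
/-- A strict directed 3-cycle in the associated digraph implies
weak efficiency of `w`. -/
theorem three_cycle_implies_weak_efficiency
    {n : ℕ} (hn : 3 ≤ n) (A : Matrix (Fin n) (Fin n) ℝ)
    (hApos : ∀ i j, 0 < A i j) (hArec : ∀ i j, A i j = (A j i)⁻¹)
    (w : Fin n → ℝ) (hw : ∀ i, 0 < w i)
    (i j k : Fin n) (hij : i ≠ j) (hjk : j ≠ k) (hki : k ≠ i)
    (h1 : A i j < w i / w j) (h2 : A j k < w j / w k) (h3 : A k i < w k / w i) :
    ¬ ∃ w' : Fin n → ℝ, (∀ i, 0 < w' i) ∧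
        (∀ p q, p ≠ q → |A p q - w' p / w' q| < |A p q - w p / w q|) := by
  rintro ⟨w', hw', h⟩
  have key : ∀ p q : Fin n, p ≠ q → A p q < w p / w q → w' p / w' q < w p / w q := by
    intro p q hpq hA
    have h0 := h p q hpq
    rw [abs_of_neg (by linarith : A p q - w p / w q < 0)] at h0
    have := abs_lt.mp h0
    linarith [this.1]
  have k1 := key i j hij h1
  have k2 := key j k hjk h2
  have k3 := key k i (Ne.symm hki.symm) h3
  have pij : 0 < w' i / w' j := div_pos (hw' i) (hw' j)
  have pjk : 0 < w' j / w' k := div_pos (hw' j) (hw' k)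
  have pki : 0 < w' k / w' i := div_pos (hw' k) (hw' i)
  have qij : 0 < w i / w j := div_pos (hw i) (hw j)
  have qjk : 0 < w j / w k := div_pos (hw j) (hw k)
  have e1 : (w i / w j) * (w j / w k) * (w k / w i) = 1 := by
    field_simp [(hw i).ne', (hw j).ne', (hw k).ne']
  have e2 : (w' i / w' j) * (w' j / w' k) * (w' k / w' i) = 1 := by
    field_simp [(hw' i).ne', (hw' j).ne', (hw' k).ne']
  have : (w' i / w' j) * (w' j / w' k) * (w' k / w' i)
      < (w i / w j) * (w j / w k) * (w k / w i) := by
    have := mul_lt_mul'' (mul_lt_mul'' k1 k2 pij.le pjk.le) k3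
      (mul_pos pij pjk).le pki.le
    exact this
  rw [e1, e2] at this
  exact lt_irrefl 1 this
end

section
/- Let A be an n×n pairwise comparison matrix (n ≥ 3) and w a positive weight vector. Then w is strongly inefficient for A if and only if the set of outdegrees of the vertices in the directed graph associated to A and w equals {0, 1, 2, …, n−1}. -/
open scoped Classical

lemma countLt_image_eq {n : ℕ} (hn : 0 < n) (x : Fin n → ℝ) (hx : Function.Injective x) :
    Finset.image (fun i => (Finset.univ.filter (fun j => x i < x j)).card)
      (Finset.univ : Finset (Fin n)) = Finset.range n := by
  set c : Fin n → ℕ := fun i => (Finset.univ.filter (fun j => x i < x j)).card with hc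
  have hmono : ∀ i j : Fin n, x i < x j → c j < c i := by
    intro i j h
    apply Finset.card_lt_card
    have hsub : Finset.univ.filter (fun k => x j < x k) ⊆ Finset.univ.filter (fun k => x i < x k) := by
      intro k hk
      simp only [Finset.mem_filter, Finset.mem_univ, true_and] at hk ⊢
      exact h.trans hk
    rw [Finset.ssubset_iff_of_subset hsub]
    exact ⟨j, by simp [h], by simp⟩
  have hcinj : Function.Injective c := by
    intro i j hij
    by_contra hne
    rcases lt_or_gt_of_ne (fun h : x i = x j => hne (hx h)) with h | h
    · exact absurd hij (Nat.ne_of_lt (hmono i j h)).symm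
    · exact absurd hij (Nat.ne_of_lt (hmono j i h))
  apply Finset.eq_of_subset_of_card_le
  · intro m hm
    simp only [Finset.mem_image, Finset.mem_univ, true_and] at hm
    obtain ⟨i, rfl⟩ := hm
    rw [Finset.mem_range]
    calc c i ≤ (Finset.univ.erase i).card := by
              apply Finset.card_le_card
              intro k hk
              simp only [Finset.mem_filter, Finset.mem_univ, true_and] at hk
              simp only [Finset.mem_erase, Finset.mem_univ, and_true]
              rintro rfl; exact lt_irrefl _ hk
      _ < n := by
              rw [Finset.card_erase_of_mem (Finset.mem_univ i), Finset.card_univ, Fintype.card_fin]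
              omega
  · rw [Finset.card_range, Finset.card_image_of_injective _ hcinj, Finset.card_univ, Fintype.card_fin]


/-- `w` is strongly inefficient iff the set of outdegrees of the
associated digraph equals {0, 1, ..., n-1}. -/
theorem strongly_inefficient_iff_outdegrees
    {n : ℕ} (hn : 3 ≤ n) (A : Matrix (Fin n) (Fin n) ℝ)
    (hApos : ∀ i j, 0 < A i j) (hArec : ∀ i j, A i j = (A j i)⁻¹)
    (w : Fin n → ℝ) (hw : ∀ i, 0 < w i) :
    (∃ w' : Fin n → ℝ, (∀ i, 0 < w' i) ∧
        (∀ i j, i ≠ j → |A i j - w' i / w' j| < |A i j - w i / w j|)) ↔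
    Finset.image
      (fun i => (Finset.univ.filter (fun j => j ≠ i ∧ A i j ≤ w i / w j)).card)
      (Finset.univ : Finset (Fin n)) = Finset.range n := by
  constructor
  · rintro ⟨w', hw', h⟩
    set x : Fin n → ℝ := fun i => w' i / w i with hxdef
    have key : ∀ i j : Fin n, i ≠ j → ((A i j ≤ w i / w j) ↔ x i < x j) := by
      intro i j hij
      have hij' := h i j hij
      have hr : 0 < w i / w j := div_pos (hw i) (hw j)
      have hr' : 0 < w' i / w' j := div_pos (hw' i) (hw' j)
      have hxlt : (w' i / w' j < w i / w j) ↔ x i < x j := by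
        rw [div_lt_div_iff₀ (hw' j) (hw j), hxdef]
        rw [div_lt_div_iff₀ (hw i) (hw j)]
        constructor <;> intro hh <;> nlinarith [hw i, hw j, hw' i, hw' j]
      constructor
      · intro hle
        have hne : A i j ≠ w i / w j := by
          intro he
          rw [he, sub_self, abs_zero] at hij'
          exact absurd hij' (not_lt.mpr (abs_nonneg _))
        have halt : A i j < w i / w j := lt_of_le_of_ne hle hne
        have : w' i / w' j - A i j ≤ |A i j - w' i / w' j| := by
          rw [abs_sub_comm]; exact le_abs_self _
        have habs : |A i j - w i / w j| = w i / w j - A i j := by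
          rw [abs_sub_comm, abs_of_pos (by linarith)]
        rw [habs] at hij'
        exact hxlt.mp (by linarith)
      · intro hxij
        by_contra hnle
        push_neg at hnle
        have : A i j - w' i / w' j ≤ |A i j - w' i / w' j| := le_abs_self _
        have habs : |A i j - w i / w j| = A i j - w i / w j := abs_of_pos (by linarith)
        rw [habs] at hij'
        have h2 : w i / w j < w' i / w' j := by linarith
        have h3 := hxlt.mpr hxij
        linarith
    have hxinj : Function.Injective x := by
      intro i j hxe
      by_contra hij
      by_cases hle : A i j ≤ w i / w j
      · exact absurd hxe (ne_of_lt ((key i j hij).mp hle))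
      · push_neg at hle
        have : A j i ≤ w j / w i := by
          rw [hArec j i]
          calc (A i j)⁻¹ ≤ (w i / w j)⁻¹ :=
                inv_anti₀ (div_pos (hw i) (hw j)) (le_of_lt hle)
            _ = w j / w i := inv_div _ _
        exact absurd hxe.symm (ne_of_lt ((key j i (Ne.symm hij)).mp this))
    have hfil : ∀ i : Fin n,
        (Finset.univ.filter (fun j => j ≠ i ∧ A i j ≤ w i / w j)) =
        (Finset.univ.filter (fun j => x i < x j)) := by
      intro i
      ext j
      simp only [Finset.mem_filter, Finset.mem_univ, true_and]
      by_cases hij : j = i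
      · subst hij; simp
      · simp only [hij, ne_eq, not_false_eq_true, true_and]
        exact key i j (Ne.symm hij)
    rw [show (fun i => (Finset.univ.filter (fun j => j ≠ i ∧ A i j ≤ w i / w j)).card)
        = (fun i => (Finset.univ.filter (fun j => x i < x j)).card) from funext (fun i => by rw [hfil i])]
    exact countLt_image_eq (by omega) x hxinj
  · intro H
    set d : Fin n → ℕ := fun i => (Finset.univ.filter (fun j => j ≠ i ∧ A i j ≤ w i / w j)).card
      with hd
    have hdinj : Function.Injective d := by
      have hc : (Finset.univ.image d).card = (Finset.univ : Finset (Fin n)).card := by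
        rw [H, Finset.card_range, Finset.card_univ, Fintype.card_fin]
      have := Finset.injOn_of_card_image_eq hc
      intro a b hab
      exact this (Finset.mem_coe.mpr (Finset.mem_univ a)) (Finset.mem_coe.mpr (Finset.mem_univ b)) hab
    have hdn : ∀ v : Fin n, d v < n := by
      intro v
      have : d v ∈ Finset.range n := by
        rw [← H]; exact Finset.mem_image_of_mem d (Finset.mem_univ v)
      exact Finset.mem_range.mp this
    have key2 : ∀ i j : Fin n, d i < d j → A j i < w j / w i := by
      intro i j hlt
      by_contra hcon
      push_neg at hcon
      have hij : i ≠ j := by rintro rfl; exact lt_irrefl _ hlt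
      have hweak : A i j ≤ w i / w j := by
        rw [hArec i j]
        calc (A j i)⁻¹ ≤ (w j / w i)⁻¹ := inv_anti₀ (div_pos (hw j) (hw i)) hcon
          _ = w i / w j := inv_div _ _
      set k := d j with hk
      set S := Finset.univ.filter (fun v : Fin n => d v < k) with hS
      have himg : S.image d = Finset.range k := by
        ext m
        simp only [Finset.mem_image, Finset.mem_range, hS, Finset.mem_filter, Finset.mem_univ,
          true_and]
        constructor
        · rintro ⟨v, hv, rfl⟩; exact hv
        · intro hm
          have hmn : m ∈ Finset.range n := Finset.mem_range.mpr (lt_trans hm (hdn j))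
          rw [← H] at hmn
          obtain ⟨v, _, hv⟩ := Finset.mem_image.mp hmn
          exact ⟨v, by omega, hv⟩
      have hcardS : S.card = k := by
        rw [← Finset.card_image_of_injOn (hdinj.injOn), himg, Finset.card_range]
      have hsum : ∑ v ∈ S, d v = ∑ m ∈ Finset.range k, m := by
        rw [← himg, Finset.sum_image (fun a _ b _ hab => hdinj hab)]
      set T := S.sigma (fun u => Finset.univ.filter (fun v => v ≠ u ∧ A u v ≤ w u / w v)) with hT
      have hTcard : T.card = ∑ v ∈ S, d v := by
        rw [hT, Finset.card_sigma]
      set W := S.sigma (fun u => S.filter (fun v => v ≠ u ∧ A u v ≤ w u / w v)) with hW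
      have hWsub : W ⊆ T := by
        apply Finset.sigma_mono (le_refl S)
        intro u
        exact Finset.filter_subset_filter _ (Finset.subset_univ S)
      have hijT : (⟨i, j⟩ : Σ _ : Fin n, Fin n) ∈ T := by
        rw [hT, Finset.mem_sigma]
        refine ⟨Finset.mem_filter.mpr ⟨Finset.mem_univ _, hlt⟩, ?_⟩
        simp only [Finset.mem_filter, Finset.mem_univ, true_and]
        exact ⟨Ne.symm hij, hweak⟩
      have hijW : (⟨i, j⟩ : Σ _ : Fin n, Fin n) ∉ W := by
        rw [hW, Finset.mem_sigma]
        rintro ⟨-, hjmem⟩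
        have : j ∈ S := Finset.filter_subset _ _ hjmem
        simp only [hS, Finset.mem_filter, Finset.mem_univ, true_and, hk] at this
        omega
      have hWT : W.card + 1 ≤ T.card := by
        have h1 : insert (⟨i, j⟩ : Σ _ : Fin n, Fin n) W ⊆ T :=
          Finset.insert_subset hijT hWsub
        have h2 := Finset.card_le_card h1
        rwa [Finset.card_insert_of_notMem hijW] at h2
      -- double counting offDiag
      set φ : Fin n × Fin n → Σ _ : Fin n, Fin n :=
        fun p => if A p.1 p.2 ≤ w p.1 / w p.2 then ⟨p.1, p.2⟩ else ⟨p.2, p.1⟩ with hφ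
      have himgφ : S.offDiag.image φ ⊆ W := by
        intro a ha
        obtain ⟨p, hp, rfl⟩ := Finset.mem_image.mp ha
        rw [Finset.mem_offDiag] at hp
        obtain ⟨hp1, hp2, hpne⟩ := hp
        rw [hφ]
        by_cases hc : A p.1 p.2 ≤ w p.1 / w p.2
        · simp only [hc, if_pos]
          rw [hW, Finset.mem_sigma]
          exact ⟨hp1, by simp only [Finset.mem_filter]; exact ⟨hp2, Ne.symm hpne, hc⟩⟩
        · simp only [hc, if_neg, if_false]
          rw [hW, Finset.mem_sigma]
          push_neg at hc
          have : A p.2 p.1 ≤ w p.2 / w p.1 := by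
            rw [hArec p.2 p.1]
            calc (A p.1 p.2)⁻¹ ≤ (w p.1 / w p.2)⁻¹ :=
                  inv_anti₀ (div_pos (hw p.1) (hw p.2)) (le_of_lt hc)
              _ = w p.2 / w p.1 := inv_div _ _
          exact ⟨hp2, by simp only [Finset.mem_filter]; exact ⟨hp1, hpne, this⟩⟩
      have hfib : S.offDiag.card ≤ 2 * (S.offDiag.image φ).card := by
        apply Finset.card_le_mul_card_image
        intro b _
        have hsub : (S.offDiag.filter (fun p => φ p = b)) ⊆ {(b.1, b.2), (b.2, b.1)} := by
          intro p hp
          simp only [Finset.mem_filter] at hp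
          obtain ⟨-, hpb⟩ := hp
          rw [hφ] at hpb
          simp only [Finset.mem_insert, Finset.mem_singleton]
          by_cases hc : A p.1 p.2 ≤ w p.1 / w p.2
          · simp only [hc, if_pos] at hpb
            left
            have h1 : p.1 = b.1 := congrArg Sigma.fst hpb
            have h2 : p.2 = b.2 := by
              have := congrArg (fun s : Σ _ : Fin n, Fin n => s.2) hpb
              simpa using (Sigma.mk.inj_iff.mp hpb).2.eq
            exact Prod.ext h1 h2
          · simp only [hc, if_neg, if_false] at hpb
            right
            have h1 : p.2 = b.1 := congrArg Sigma.fst hpb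
            have h2 : p.1 = b.2 := (Sigma.mk.inj_iff.mp hpb).2.eq
            exact Prod.ext h2 h1
        calc (S.offDiag.filter (fun p => φ p = b)).card ≤ ({(b.1, b.2), (b.2, b.1)} : Finset (Fin n × Fin n)).card :=
              Finset.card_le_card hsub
          _ ≤ 2 := Finset.card_insert_le _ _ |>.trans (by simp)
      have hoff : S.offDiag.card = k * k - k := by
        rw [Finset.offDiag_card, hcardS]
      have hWle : S.offDiag.card ≤ 2 * W.card :=
        hfib.trans (Nat.mul_le_mul_left 2 (Finset.card_le_card himgφ))
      have hgauss : 2 * T.card = k * (k - 1) := by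
        rw [hTcard, hsum, mul_comm, Finset.sum_range_id_mul_two]
      have hk1 : 1 ≤ k := by
        have hlt' : d i < k := hlt
        omega
      have hkk : k * k = k * (k - 1) + k := by
        calc k * k = k * ((k - 1) + 1) := by rw [Nat.sub_add_cancel hk1]
          _ = k * (k - 1) + k := by ring
      have e1 : k * k - k = k * (k - 1) := Nat.sub_eq_of_eq_add hkk
      have e2 : k * (k - 1) ≤ 2 * W.card := by rw [← e1, ← hoff]; exact hWle
      have e3 : 2 * W.card + 2 ≤ 2 * T.card := by omega
      rw [hgauss] at e3
      exact absurd (e3.trans e2) (by omega)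
    set P := (Finset.univ ×ˢ Finset.univ).filter (fun p : Fin n × Fin n => d p.1 < d p.2) with hP
    have hPne : P.Nonempty := by
      have h0 : (⟨0, by omega⟩ : Fin n) ≠ ⟨1, by omega⟩ := by
        intro h; exact absurd (congrArg Fin.val h) (by simp)
      have hd0 : d ⟨0, by omega⟩ ≠ d ⟨1, by omega⟩ := fun h => h0 (hdinj h)
      rcases lt_or_gt_of_ne hd0 with h | h
      · exact ⟨(⟨0, by omega⟩, ⟨1, by omega⟩), by simp [hP, h]⟩
      · exact ⟨(⟨1, by omega⟩, ⟨0, by omega⟩), by simp [hP, h]⟩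
    set g : Fin n × Fin n → ℝ := fun p => A p.2 p.1 * (w p.1 / w p.2) with hg
    set c := P.sup' hPne g with hc
    have hc0 : 0 < c := by
      obtain ⟨p, hp⟩ := hPne
      exact lt_of_lt_of_le (mul_pos (hApos _ _) (div_pos (hw _) (hw _))) (Finset.le_sup' g hp)
    have hc1 : c < 1 := by
      rw [hc, Finset.sup'_lt_iff]
      intro p hp
      simp only [hP, Finset.mem_filter] at hp
      have hkey := key2 p.1 p.2 hp.2
      rw [hg]
      have h1 : (0:ℝ) < w p.1 / w p.2 := div_pos (hw _) (hw _)
      have h2 : (w p.2 / w p.1) * (w p.1 / w p.2) = 1 := by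
        rw [div_mul_div_comm, mul_comm]
        exact div_self (ne_of_gt (mul_pos (hw _) (hw _)))
      calc A p.2 p.1 * (w p.1 / w p.2) < (w p.2 / w p.1) * (w p.1 / w p.2) :=
            mul_lt_mul_of_pos_right hkey h1
        _ = 1 := h2
    set t := c ^ ((n:ℝ)⁻¹) with ht
    have ht0 : 0 < t := Real.rpow_pos_of_pos hc0 _
    have ht1 : t < 1 := Real.rpow_lt_one hc0.le hc1 (by positivity)
    have hpow : ∀ e : ℕ, 1 ≤ e → e < n → c < t ^ e := by
      intro e he hen
      have h1 : t ^ e = c ^ ((n:ℝ)⁻¹ * (e:ℕ)) := by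
        rw [ht, ← Real.rpow_natCast (c ^ ((n:ℝ)⁻¹)) e, ← Real.rpow_mul hc0.le]
      rw [h1]
      have h2 : (n:ℝ)⁻¹ * (e:ℕ) < 1 := by
        rw [inv_mul_eq_div, div_lt_one (by positivity)]
        exact_mod_cast hen
      calc c = c ^ (1:ℝ) := (Real.rpow_one c).symm
        _ < c ^ ((n:ℝ)⁻¹ * (e:ℕ)) := Real.rpow_lt_rpow_of_exponent_gt hc0 hc1 h2
    refine ⟨fun i => w i * t ^ (d i), fun i => mul_pos (hw i) (pow_pos ht0 _), ?_⟩
    have claim : ∀ i j : Fin n, d j < d i →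
        A i j < w i * t ^ (d i) / (w j * t ^ (d j)) ∧
        w i * t ^ (d i) / (w j * t ^ (d j)) < w i / w j := by
      intro i j hlt
      set e := d i - d j with he
      have he1 : 1 ≤ e := by omega
      have hen : e < n := by have := hdn i; omega
      have hr' : w i * t ^ (d i) / (w j * t ^ (d j)) = (w i / w j) * t ^ e := by
        rw [he, pow_sub₀ t (ne_of_gt ht0) (le_of_lt hlt)]
        field_simp
      have hmem : (j, i) ∈ P := by simp [hP, hlt]
      have hge : A i j * (w j / w i) ≤ c := Finset.le_sup' g hmem
      have hlt2 : A i j * (w j / w i) < t ^ e := lt_of_le_of_lt hge (hpow e he1 hen)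
      constructor
      · rw [hr']
        have h3 : A i j * (w j / w i) * (w i / w j) < t ^ e * (w i / w j) :=
          mul_lt_mul_of_pos_right hlt2 (div_pos (hw i) (hw j))
        have h4 : A i j * (w j / w i) * (w i / w j) = A i j := by
          rw [mul_assoc, div_mul_div_comm, mul_comm (w j)]
          rw [div_self (ne_of_gt (mul_pos (hw _) (hw _))), mul_one]
        rw [h4] at h3
        linarith [h3]
      · rw [hr']
        have h5 : t ^ e < 1 := pow_lt_one₀ ht0.le ht1 (by omega)
        have := mul_lt_mul_of_pos_left h5 (div_pos (hw i) (hw j))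
        simpa using this
    intro i j hij
    have hdne : d i ≠ d j := fun h => hij (hdinj h)
    rcases lt_or_gt_of_ne hdne with hlt | hlt
    · -- d i < d j : i is the loser
      obtain ⟨h1, h2⟩ := claim j i hlt
      have hr'pos : 0 < w j * t ^ (d j) / (w i * t ^ (d i)) :=
        div_pos (mul_pos (hw j) (pow_pos ht0 _)) (mul_pos (hw i) (pow_pos ht0 _))
      have hApos' := hApos j i
      -- invert
      have i1 : (w j / w i)⁻¹ < (w j * t ^ (d j) / (w i * t ^ (d i)))⁻¹ :=
        inv_strictAnti₀ hr'pos h2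
      have i2 : (w j * t ^ (d j) / (w i * t ^ (d i)))⁻¹ < (A j i)⁻¹ :=
        inv_strictAnti₀ hApos' h1
      rw [inv_div] at i1 i2
      rw [inv_div] at i1
      rw [← hArec i j] at i2
      have habs1 : |A i j - w i * t ^ (d i) / (w j * t ^ (d j))| =
          A i j - w i * t ^ (d i) / (w j * t ^ (d j)) := abs_of_pos (by linarith)
      have habs2 : |A i j - w i / w j| = A i j - w i / w j := abs_of_pos (by linarith)
      rw [habs1, habs2]
      linarith
    · -- d j < d i : i is the winner
      obtain ⟨h1, h2⟩ := claim i j hlt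
      have habs1 : |A i j - w i * t ^ (d i) / (w j * t ^ (d j))| =
          -(A i j - w i * t ^ (d i) / (w j * t ^ (d j))) := abs_of_neg (by linarith)
      have habs2 : |A i j - w i / w j| = -(A i j - w i / w j) := abs_of_neg (by linarith)
      rw [habs1, habs2]
      linarith
end

section
/- Let A be an n×n pairwise comparison matrix (n ≥ 3), let w be a positive weight vector, and let λ ∈ ℝ with λ ≥ n satisfy A·w = λ·w (in particular this holds when w is the principal right eigenvector of A, since the Perron eigenvalue of a pairwise comparison matrix is at least n). Then w is weakly efficient for A. -/
/-- A positive eigenvector of `A` with eigenvalue `λ ≥ n`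
(in particular the principal right eigenvector) is weakly efficient. -/
theorem principal_eigenvector_weakly_efficient
    {n : ℕ} (hn : 3 ≤ n) (A : Matrix (Fin n) (Fin n) ℝ)
    (hApos : ∀ i j, 0 < A i j) (hArec : ∀ i j, A i j = (A j i)⁻¹)
    (w : Fin n → ℝ) (hw : ∀ i, 0 < w i)
    (lam : ℝ) (hlam : (n : ℝ) ≤ lam) (heig : A.mulVec w = lam • w) :
    ¬ ∃ w' : Fin n → ℝ, (∀ i, 0 < w' i) ∧
        (∀ i j, i ≠ j → |A i j - w' i / w' j| < |A i j - w i / w j|) := by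
  rintro ⟨w', hw', hlt⟩
  have hnpos : 0 < n := by omega
  haveI : Nonempty (Fin n) := ⟨⟨0, hnpos⟩⟩
  obtain ⟨i, -, hi⟩ := Finset.exists_min_image Finset.univ
    (fun k => w' k / w k) Finset.univ_nonempty
  have hAii : A i i = 1 := by
    have h := hArec i i
    have hp := hApos i i
    have hne : A i i ≠ 0 := ne_of_gt hp
    have h2 : A i i * A i i = 1 := by
      nth_rewrite 2 [h]
      field_simp
    rcases mul_self_eq_one_iff.mp h2 with h1 | h1
    · exact h1
    · linarith
  have key : ∀ j, j ≠ i → A i j * w j < w i := by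
    intro j hj
    have hx : w' i / w i ≤ w' j / w j := hi j (Finset.mem_univ j)
    have ht' : w' i / w' j ≤ w i / w j := by
      rw [div_le_div_iff₀ (hw' j) (hw j)]
      rw [div_le_div_iff₀ (hw i) (hw j)] at hx
      nlinarith [hw i, hw j, hw' i, hw' j]
    have hlt' := hlt i j (Ne.symm hj)
    have hA : A i j < w i / w j := by
      by_contra hle
      push_neg at hle
      have h1 : |A i j - w i / w j| = A i j - w i / w j :=
        abs_of_nonneg (by linarith)
      have h2 := le_abs_self (A i j - w' i / w' j)
      rw [h1] at hlt'
      linarith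
    calc A i j * w j < (w i / w j) * w j := mul_lt_mul_of_pos_right hA (hw j)
      _ = w i := by rw [div_mul_cancel₀ _ (ne_of_gt (hw j))]
  have hsum : ∑ j, A i j * w j = lam * w i := by
    have := congrFun heig i
    simpa [Matrix.mulVec, dotProduct, Pi.smul_apply, smul_eq_mul] using this
  have hsplit : ∑ j ∈ Finset.univ.erase i, A i j * w j = lam * w i - w i := by
    have h := Finset.sum_erase_add Finset.univ (fun j => A i j * w j)
      (Finset.mem_univ i)
    simp only [hAii, one_mul] at h
    linarith
  have hcard : (Finset.univ.erase i).card = n - 1 := by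
    rw [Finset.card_erase_of_mem (Finset.mem_univ i), Finset.card_univ,
      Fintype.card_fin]
  have hne : (Finset.univ.erase i).Nonempty := by
    rw [← Finset.card_pos, hcard]; omega
  have hstrict : ∑ j ∈ Finset.univ.erase i, A i j * w j
      < ∑ _j ∈ Finset.univ.erase i, w i :=
    Finset.sum_lt_sum_of_nonempty hne
      (fun j hj => key j (Finset.ne_of_mem_erase hj))
  rw [Finset.sum_const, hcard, nsmul_eq_mul] at hstrict
  have hcast : ((n - 1 : ℕ) : ℝ) = (n : ℝ) - 1 := by
    rw [Nat.cast_sub (by omega)]; simp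
  rw [hcast, hsplit] at hstrict
  nlinarith [hw i]
end

section
/- Let A be an n×n pairwise comparison matrix (n ≥ 3) and w a positive weight vector that is inefficient for A. Then there exists a positive weight vector w* that is efficient for A and internally dominates w. -/
open Filter Topology

lemma abs_sub_le_of_between {a r ρ : ℝ} (h1 : min a r ≤ ρ) (h2 : ρ ≤ max a r) :
    |a - ρ| ≤ |a - r| := by
  rcases le_total a r with h | h
  · rw [min_eq_left h] at h1; rw [max_eq_right h] at h2
    rw [abs_of_nonpos (by linarith), abs_of_nonpos (by linarith)]; linarith
  · rw [min_eq_right h] at h1; rw [max_eq_left h] at h2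
    rw [abs_of_nonneg (by linarith), abs_of_nonneg (by linarith)]; linarith

lemma abs_sub_lt_of_between {a r ρ : ℝ} (h1 : min a r ≤ ρ) (h2 : ρ ≤ max a r)
    (hne : ρ ≠ r) : |a - ρ| < |a - r| := by
  rcases le_total a r with h | h
  · rw [min_eq_left h] at h1; rw [max_eq_right h] at h2
    have : ρ < r := lt_of_le_of_ne h2 hne
    rw [abs_of_nonpos (by linarith), abs_of_nonpos (by linarith)]; linarith
  · rw [min_eq_right h] at h1; rw [max_eq_left h] at h2
    have : r < ρ := lt_of_le_of_ne h1 (Ne.symm hne)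
    rw [abs_of_nonneg (by linarith), abs_of_nonneg (by linarith)]; linarith

lemma eventually_affine_nonneg {c0 c1 : ℝ} (h0 : 0 ≤ c0) (h : 0 ≤ c1 ∨ 0 < c0) :
    ∀ᶠ t in 𝓝[>] (0:ℝ), 0 ≤ (1-t)*c0 + t*c1 := by
  rcases h with h1 | h1
  · filter_upwards [Ioo_mem_nhdsGT_of_mem (by constructor <;> norm_num :
      (0:ℝ) ∈ Set.Ico (0:ℝ) 1)] with t ht
    nlinarith [ht.1.le, ht.2.le]
  · have hc : Continuous (fun t : ℝ => (1-t)*c0 + t*c1) := by continuity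
    have h2 : (fun t : ℝ => (1-t)*c0 + t*c1) 0 = c0 := by simp
    have h3 : ∀ᶠ t in 𝓝 (0:ℝ), 0 < (1-t)*c0 + t*c1 := by
      have h4 : 0 < (1-(0:ℝ))*c0 + 0*c1 := by simpa using h1
      exact (hc.tendsto 0).eventually (eventually_gt_nhds h4)
    exact (h3.filter_mono nhdsWithin_le_nhds).mono fun t ht => ht.le

lemma div_div_div_same {a b s : ℝ} (hs : s ≠ 0) : (a / s) / (b / s) = a / b := by
  rw [div_div_div_comm, div_self hs, div_one]

lemma exists_internal_better {n : ℕ} (A : Matrix (Fin n) (Fin n) ℝ)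
    (x w' : Fin n → ℝ) (hx : ∀ i, 0 < x i) (hw' : ∀ i, 0 < w' i)
    (hdom : ∀ i j, |A i j - w' i / w' j| ≤ |A i j - x i / x j|)
    (hstrict : ∃ k l, |A k l - w' k / w' l| < |A k l - x k / x l|) :
    ∃ y : Fin n → ℝ, (∀ i, 0 < y i) ∧
      (∀ i j, min (A i j) (x i / x j) ≤ y i / y j ∧ y i / y j ≤ max (A i j) (x i / x j)) ∧
      (∑ i, ∑ j, |A i j - y i / y j|) < (∑ i, ∑ j, |A i j - x i / x j|) := by
  obtain ⟨k, l, hkl⟩ := hstrict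
  have hall : ∀ᶠ t in 𝓝[>] (0:ℝ), ((0 < t ∧ t < 1) ∧ ∀ p : Fin n × Fin n,
      (0 ≤ (1-t)*(x p.1 - min (A p.1 p.2) (x p.1 / x p.2) * x p.2)
          + t*(w' p.1 - min (A p.1 p.2) (x p.1 / x p.2) * w' p.2)) ∧
      (0 ≤ (1-t)*(max (A p.1 p.2) (x p.1 / x p.2) * x p.2 - x p.1)
          + t*(max (A p.1 p.2) (x p.1 / x p.2) * w' p.2 - w' p.1))) := by
    refine Filter.Eventually.and ?_ (Filter.eventually_all.mpr fun p => Filter.Eventually.and ?_ ?_)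
    · filter_upwards [Ioo_mem_nhdsGT_of_mem (by constructor <;> norm_num :
        (0:ℝ) ∈ Set.Ico (0:ℝ) 1)] with t ht
      exact ⟨ht.1, ht.2⟩
    · -- lower constraint
      obtain ⟨i, j⟩ := p
      refine eventually_affine_nonneg ?_ ?_
      · have := (le_div_iff₀ (hx j)).mp (min_le_right (A i j) (x i / x j))
        linarith
      · rcases le_or_gt (min (A i j) (x i / x j)) (w' i / w' j) with h | h
        · left
          have := (le_div_iff₀ (hw' j)).mp h
          linarith
        · right
          -- w' ratio below min: then A i j < x i / x j
          have hd := hdom i j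
          have haltr : A i j < x i / x j := by
            rcases le_total (x i / x j) (A i j) with hra | hra
            · exfalso
              rw [min_eq_right hra] at h
              have hd2 : |A i j - x i / x j| = A i j - x i / x j := abs_of_nonneg (by linarith)
              rw [hd2] at hd
              have h2 : A i j - w' i / w' j ≤ |A i j - w' i / w' j| := le_abs_self _
              linarith
            · rcases lt_or_eq_of_le hra with hlt | heq
              · exact hlt
              · exfalso
                rw [min_eq_left hra] at h
                simp only [← heq, sub_self, abs_zero] at hd
                have h2 : A i j - w' i / w' j ≤ |A i j - w' i / w' j| := le_abs_self _
                have h3 : |A i j - w' i / w' j| ≤ 0 := hd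
                linarith
          rw [min_eq_left haltr.le]
          have := (lt_div_iff₀ (hx j)).mp haltr
          linarith
    · -- upper constraint
      obtain ⟨i, j⟩ := p
      refine eventually_affine_nonneg ?_ ?_
      · have := (div_le_iff₀ (hx j)).mp (le_max_right (A i j) (x i / x j))
        linarith
      · rcases le_or_gt (w' i / w' j) (max (A i j) (x i / x j)) with h | h
        · left
          have := (div_le_iff₀ (hw' j)).mp h
          linarith
        · right
          have hd := hdom i j
          have haltr : x i / x j < A i j := by
            rcases le_total (A i j) (x i / x j) with hra | hra
            · exfalso
              rw [max_eq_right hra] at h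
              have hd2 : |A i j - x i / x j| = -(A i j - x i / x j) := abs_of_nonpos (by linarith)
              rw [hd2] at hd
              have h2 : -(A i j - w' i / w' j) ≤ |A i j - w' i / w' j| := neg_le_abs _
              linarith
            · rcases lt_or_eq_of_le hra with hlt | heq
              · exact hlt
              · exfalso
                rw [max_eq_left hra] at h
                simp only [heq, sub_self, abs_zero] at hd
                have h2 : -(A i j - w' i / w' j) ≤ |A i j - w' i / w' j| := neg_le_abs _
                have h3 : |A i j - w' i / w' j| ≤ 0 := hd
                linarith
          rw [max_eq_left haltr.le]
          have := (div_lt_iff₀ (hx j)).mp haltr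
          linarith
  obtain ⟨t, ⟨ht0, ht1⟩, hcons⟩ := hall.exists
  set y : Fin n → ℝ := fun i => (1-t) * x i + t * w' i with hy
  have hypos : ∀ i, 0 < y i := by
    intro i
    show 0 < (1-t) * x i + t * w' i
    nlinarith [mul_pos (by linarith : (0:ℝ) < 1 - t) (hx i), mul_pos ht0 (hw' i)]
  have hbtw : ∀ i j, min (A i j) (x i / x j) ≤ y i / y j ∧ y i / y j ≤ max (A i j) (x i / x j) := by
    intro i j
    obtain ⟨hlo, hhi⟩ := hcons (i, j)
    simp only at hlo hhi
    have hyj := hypos j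
    have hyi : y i = (1-t) * x i + t * w' i := rfl
    have hyj' : y j = (1-t) * x j + t * w' j := rfl
    constructor
    · rw [le_div_iff₀ hyj, hyi, hyj']; nlinarith [hlo]
    · rw [div_le_iff₀ hyj, hyi, hyj']; nlinarith [hhi]
  have hne : y k / y l ≠ x k / x l := by
    intro hEq
    have h1 : y k * x l = x k * y l :=
      (div_eq_div_iff (ne_of_gt (hypos l)) (ne_of_gt (hx l))).mp hEq
    have h3 : t * (w' k * x l) = t * (x k * w' l) := by
      have hyk : y k = (1-t) * x k + t * w' k := rfl
      have hyl : y l = (1-t) * x l + t * w' l := rfl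
      rw [hyk, hyl] at h1; nlinarith [h1]
    have h2 : w' k * x l = x k * w' l := mul_left_cancel₀ (ne_of_gt ht0) h3
    have h4 : w' k / w' l = x k / x l :=
      (div_eq_div_iff (ne_of_gt (hw' l)) (ne_of_gt (hx l))).mpr h2
    rw [h4] at hkl
    exact lt_irrefl _ hkl
  refine ⟨y, hypos, hbtw, ?_⟩
  refine Finset.sum_lt_sum (fun i _ => Finset.sum_le_sum fun j _ =>
      abs_sub_le_of_between (hbtw i j).1 (hbtw i j).2) ⟨k, Finset.mem_univ k,
    Finset.sum_lt_sum (fun j _ => abs_sub_le_of_between (hbtw k j).1 (hbtw k j).2)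
      ⟨l, Finset.mem_univ l, abs_sub_lt_of_between (hbtw k l).1 (hbtw k l).2 hne⟩⟩


/-- If `w` is inefficient, then there is an efficient positive weight
vector `w*` that internally dominates `w`. -/
theorem inefficient_has_efficient_internal_dominator
    {n : ℕ} (hn : 3 ≤ n) (A : Matrix (Fin n) (Fin n) ℝ)
    (hApos : ∀ i j, 0 < A i j) (hArec : ∀ i j, A i j = (A j i)⁻¹)
    (w : Fin n → ℝ) (hw : ∀ i, 0 < w i)
    (hineff : ∃ w' : Fin n → ℝ, (∀ i, 0 < w' i) ∧
        (∀ i j, |A i j - w' i / w' j| ≤ |A i j - w i / w j|) ∧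
        (∃ k l, |A k l - w' k / w' l| < |A k l - w k / w l|)) :
    ∃ ws : Fin n → ℝ, (∀ i, 0 < ws i) ∧
      -- ws is efficient for A
      (¬ ∃ w' : Fin n → ℝ, (∀ i, 0 < w' i) ∧
        (∀ i j, |A i j - w' i / w' j| ≤ |A i j - ws i / ws j|) ∧
        (∃ k l, |A k l - w' k / w' l| < |A k l - ws k / ws l|)) ∧
      -- ws internally dominates w
      (∀ i j, (A i j ≤ w i / w j → A i j ≤ ws i / ws j ∧ ws i / ws j ≤ w i / w j) ∧
              (A i j ≥ w i / w j → A i j ≥ ws i / ws j ∧ ws i / ws j ≥ w i / w j)) ∧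
      (∃ k l, (A k l ≤ w k / w l ∧ ws k / ws l < w k / w l) ∨
              (A k l ≥ w k / w l ∧ ws k / ws l > w k / w l)) := by
  classical
  obtain ⟨w0, hw0pos, hw0dom, hw0str⟩ := hineff
  set S : Set (Fin n → ℝ) := {x | (∀ i, 0 ≤ x i) ∧
      (∀ i j, min (A i j) (w i / w j) * x j ≤ x i ∧ x i ≤ max (A i j) (w i / w j) * x j) ∧
      (∑ i, x i = 1)} with hS
  have hmnpos : ∀ i j, 0 < min (A i j) (w i / w j) := fun i j =>
    lt_min (hApos i j) (div_pos (hw i) (hw j))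
  have hSpos : ∀ x ∈ S, ∀ i, 0 < x i := by
    intro x hx i
    obtain ⟨hx0, hxr, hxs⟩ := hx
    have hex : ∃ j, 0 < x j := by
      by_contra hc
      push_neg at hc
      have : (∑ i, x i) ≤ 0 := Finset.sum_nonpos fun j _ => hc j
      linarith
    obtain ⟨j, hj⟩ := hex
    calc (0:ℝ) < min (A i j) (w i / w j) * x j := mul_pos (hmnpos i j) hj
    _ ≤ x i := (hxr i j).1
  have hn0 : 0 < n := by omega
  have hwsum : 0 < ∑ i, w i := Finset.sum_pos (fun i _ => hw i) ⟨⟨0, hn0⟩, Finset.mem_univ _⟩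
  -- normalization: a positive vector with ratios within the bounds yields an element of S
  -- with the same ratios
  have hnorm : ∀ y : Fin n → ℝ, (∀ i, 0 < y i) →
      (∀ i j, min (A i j) (w i / w j) ≤ y i / y j ∧ y i / y j ≤ max (A i j) (w i / w j)) →
      ∃ z ∈ S, ∀ i j, z i / z j = y i / y j := by
    intro y hy hyr
    have hsy : 0 < ∑ i, y i := Finset.sum_pos (fun i _ => hy i) ⟨⟨0, hn0⟩, Finset.mem_univ _⟩
    have hr : ∀ i j, (y i / (∑ k, y k)) / (y j / (∑ k, y k)) = y i / y j :=
      fun i j => div_div_div_same (ne_of_gt hsy)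
    refine ⟨fun i => y i / (∑ k, y k), ⟨fun i => (div_pos (hy i) hsy).le, fun i j => ?_, ?_⟩,
      fun i j => hr i j⟩
    · have hzj : 0 < y j / (∑ k, y k) := div_pos (hy j) hsy
      have h1 : min (A i j) (w i / w j) ≤ (y i / (∑ k, y k)) / (y j / (∑ k, y k)) := by
        rw [hr i j]; exact (hyr i j).1
      have h2 : (y i / (∑ k, y k)) / (y j / (∑ k, y k)) ≤ max (A i j) (w i / w j) := by
        rw [hr i j]; exact (hyr i j).2
      exact ⟨(le_div_iff₀ hzj).mp h1, (div_le_iff₀ hzj).mp h2⟩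
    · rw [← Finset.sum_div, div_self (ne_of_gt hsy)]
  -- w itself (normalized) is in S
  have hwhS : ∃ z ∈ S, ∀ i j, z i / z j = w i / w j := by
    refine hnorm w hw fun i j => ⟨min_le_right _ _, le_max_right _ _⟩
  obtain ⟨wh, hwhmem, hwhr⟩ := hwhS
  -- S is compact
  have hclosed : IsClosed S := by
    have hrw : S = (⋂ i, {x : Fin n → ℝ | 0 ≤ x i}) ∩
        ((⋂ i, ⋂ j, ({x : Fin n → ℝ | min (A i j) (w i / w j) * x j ≤ x i} ∩
          {x : Fin n → ℝ | x i ≤ max (A i j) (w i / w j) * x j})) ∩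
          {x : Fin n → ℝ | ∑ i, x i = 1}) := by
      ext x
      simp only [hS, Set.mem_setOf_eq, Set.mem_inter_iff, Set.mem_iInter, forall_and]
      try tauto
    rw [hrw]
    refine IsClosed.inter (isClosed_iInter fun i =>
        isClosed_le continuous_const (continuous_apply i))
      (IsClosed.inter (isClosed_iInter fun i => isClosed_iInter fun j => IsClosed.inter
        (isClosed_le (continuous_const.mul (continuous_apply j)) (continuous_apply i))
        (isClosed_le (continuous_apply i) (continuous_const.mul (continuous_apply j))))
        (isClosed_eq (continuous_finset_sum _ fun i _ => continuous_apply i) continuous_const))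
  have hbdd : Bornology.IsBounded S := by
    rw [isBounded_iff_forall_norm_le]
    refine ⟨1, fun x hx => ?_⟩
    obtain ⟨hx0, hxr, hxs⟩ := hx
    rw [pi_norm_le_iff_of_nonneg zero_le_one]
    intro i
    rw [Real.norm_eq_abs, abs_of_nonneg (hx0 i)]
    calc x i ≤ ∑ j, x j := Finset.single_le_sum (fun j _ => hx0 j) (Finset.mem_univ i)
    _ = 1 := hxs
  have hcomp : IsCompact S := Metric.isCompact_of_isClosed_isBounded hclosed hbdd
  -- continuity of the objective
  have hFc : ContinuousOn (fun x : Fin n → ℝ => ∑ i, ∑ j, |A i j - x i / x j|) S := by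
    refine continuousOn_finset_sum _ fun i _ => continuousOn_finset_sum _ fun j _ => ?_
    exact (continuousOn_const.sub (((continuous_apply i).continuousOn).div
      ((continuous_apply j).continuousOn) fun x hx => ne_of_gt (hSpos x hx j))).abs
  obtain ⟨ws, hwsS, hwsmin⟩ := hcomp.exists_isMinOn ⟨wh, hwhmem⟩ hFc
  have hwspos : ∀ i, 0 < ws i := hSpos ws hwsS
  have hwsr : ∀ i j, min (A i j) (w i / w j) * ws j ≤ ws i ∧
      ws i ≤ max (A i j) (w i / w j) * ws j := hwsS.2.1
  have hwsratio : ∀ i j, min (A i j) (w i / w j) ≤ ws i / ws j ∧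
      ws i / ws j ≤ max (A i j) (w i / w j) := fun i j =>
    ⟨(le_div_iff₀ (hwspos j)).mpr (hwsr i j).1, (div_le_iff₀ (hwspos j)).mpr (hwsr i j).2⟩
  have hmin : ∀ z ∈ S, (∑ i, ∑ j, |A i j - ws i / ws j|) ≤ ∑ i, ∑ j, |A i j - z i / z j| :=
    fun z hz => isMinOn_iff.mp hwsmin z hz
  refine ⟨ws, hwspos, ?_, ?_, ?_⟩
  · -- efficiency
    rintro ⟨w', hw'pos, hdom, hstr⟩
    obtain ⟨y, hy, hybtw, hysum⟩ := exists_internal_better A ws w' hwspos hw'pos hdom hstr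
    have hyr : ∀ i j, min (A i j) (w i / w j) ≤ y i / y j ∧
        y i / y j ≤ max (A i j) (w i / w j) := by
      intro i j
      obtain ⟨h1, h2⟩ := hybtw i j
      obtain ⟨h3, h4⟩ := hwsratio i j
      exact ⟨le_trans (le_min (min_le_left _ _) h3) h1,
        le_trans h2 (max_le (le_max_left _ _) h4)⟩
    obtain ⟨z, hzS, hzr⟩ := hnorm y hy hyr
    have h5 := hmin z hzS
    have h6 : (∑ i, ∑ j, |A i j - z i / z j|) = ∑ i, ∑ j, |A i j - y i / y j| :=
      Finset.sum_congr rfl fun i _ => Finset.sum_congr rfl fun j _ => by rw [hzr i j]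
    rw [h6] at h5
    linarith
  · -- internal dominance (non-strict part)
    intro i j
    obtain ⟨h1, h2⟩ := hwsratio i j
    constructor
    · intro hle
      rw [min_eq_left hle] at h1
      rw [max_eq_right hle] at h2
      exact ⟨h1, h2⟩
    · intro hge
      rw [min_eq_right hge] at h1
      rw [max_eq_left hge] at h2
      exact ⟨h2, h1⟩
  · -- strict pair
    obtain ⟨y, hy, hybtw, hysum⟩ := exists_internal_better A w w0 hw hw0pos hw0dom hw0str
    have hyr : ∀ i j, min (A i j) (w i / w j) ≤ y i / y j ∧
        y i / y j ≤ max (A i j) (w i / w j) := fun i j => ⟨(hybtw i j).1, (hybtw i j).2⟩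
    obtain ⟨z, hzS, hzr⟩ := hnorm y hy hyr
    have h5 := hmin z hzS
    have h6 : (∑ i, ∑ j, |A i j - z i / z j|) = ∑ i, ∑ j, |A i j - y i / y j| :=
      Finset.sum_congr rfl fun i _ => Finset.sum_congr rfl fun j _ => by rw [hzr i j]
    rw [h6] at h5
    have hlt : (∑ i, ∑ j, |A i j - ws i / ws j|) < ∑ i, ∑ j, |A i j - w i / w j| :=
      lt_of_le_of_lt h5 hysum
    by_contra hcon
    push_neg at hcon
    have heq : ∀ k l : Fin n, |A k l - ws k / ws l| = |A k l - w k / w l| := by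
      intro k l
      obtain ⟨h1, h2⟩ := hwsratio k l
      obtain ⟨hc1, hc2⟩ := hcon k l
      rcases le_total (A k l) (w k / w l) with h | h
      · rw [min_eq_left h] at h1
        rw [max_eq_right h] at h2
        have : ws k / ws l = w k / w l := le_antisymm h2 (hc1 h)
        rw [this]
      · rw [min_eq_right h] at h1
        rw [max_eq_left h] at h2
        have : ws k / ws l = w k / w l := le_antisymm (hc2 h) h1
        rw [this]
    have : (∑ i, ∑ j, |A i j - ws i / ws j|) = ∑ i, ∑ j, |A i j - w i / w j| :=
      Finset.sum_congr rfl fun i _ => Finset.sum_congr rfl fun j _ => heq i j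
    linarith
end

section
/- Let A be an n×n pairwise comparison matrix (n ≥ 3) and w a positive weight vector that is strongly inefficient for A. Then there exists a positive weight vector x* that is weakly efficient for A and internally and strictly dominates w, i.e., for all i ≠ j: a_ij ≤ w_i/w_j implies a_ij ≤ x*_i/x*_j < w_i/w_j, and a_ij ≥ w_i/w_j implies a_ij ≥ x*_i/x*_j > w_i/w_j. -/
open Filter Topology

lemma pair_ev (a b c : ℝ) (ha : 0 < a) (hb : 0 < b) (h : |c - b| < |c - a|) :
    ∀ᶠ t in 𝓝[>] (0:ℝ),
      (c ≤ a → c ≤ a * (b/a) ^ t ∧ a * (b/a) ^ t < a) ∧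
      (a ≤ c → a * (b/a) ^ t ≤ c ∧ a < a * (b/a) ^ t) := by
  have hca : c ≠ a := by
    intro he; rw [he] at h; simp at h; linarith [abs_nonneg (a - b)]
  have htend : Tendsto (fun t : ℝ => a * (b/a) ^ t) (𝓝[>] 0) (𝓝 a) := by
    have : ContinuousAt (fun t : ℝ => a * (b/a) ^ t) 0 :=
      continuousAt_const.mul (Real.continuousAt_const_rpow (by positivity))
    have h2 : Tendsto (fun t : ℝ => a * (b/a) ^ t) (𝓝[>] (0:ℝ)) (𝓝 (a * (b/a) ^ (0:ℝ))) :=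
      this.tendsto.mono_left nhdsWithin_le_nhds
    simpa using h2
  rcases lt_or_gt_of_ne hca with hlt | hgt
  · -- c < a, then b < a
    have hba : b < a := by
      have h2 : b - c ≤ |c - b| := by rw [abs_sub_comm]; exact le_abs_self _
      have h3 : |c - a| = a - c := by rw [abs_sub_comm, abs_of_pos (by linarith)]
      linarith
    filter_upwards [htend.eventually_const_lt hlt, self_mem_nhdsWithin] with t h1 h2
    refine ⟨fun _ => ⟨h1.le, ?_⟩, fun hc => absurd hc hlt.not_ge⟩
    have : (b/a) ^ t < 1 := Real.rpow_lt_one (by positivity) ((div_lt_one ha).2 hba) h2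
    calc a * (b/a)^t < a * 1 := by nlinarith
    _ = a := mul_one a
  · -- a < c, then a < b
    have hba : a < b := by
      have h3 : |c - a| = c - a := abs_of_pos (by linarith)
      have h2 : c - b ≤ |c - b| := le_abs_self _
      linarith
    filter_upwards [htend.eventually_lt_const hgt, self_mem_nhdsWithin] with t h1 h2
    refine ⟨fun hc => absurd hc hgt.not_ge, fun _ => ⟨h1.le, ?_⟩⟩
    have : 1 < (b/a) ^ t :=
      (Real.one_lt_rpow_iff_of_pos (by positivity)).2 (Or.inl ⟨(one_lt_div ha).2 hba, h2⟩)
    nlinarith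

lemma internalize {n : ℕ} (A : Matrix (Fin n) (Fin n) ℝ)
    (x y : Fin n → ℝ) (hx : ∀ i, 0 < x i) (hy : ∀ i, 0 < y i)
    (hd : ∀ i j, i ≠ j → |A i j - y i / y j| < |A i j - x i / x j|) :
    ∃ z : Fin n → ℝ, (∀ i, 0 < z i) ∧
      ∀ i j, i ≠ j →
        (A i j ≤ x i / x j → A i j ≤ z i / z j ∧ z i / z j < x i / x j) ∧
        (x i / x j ≤ A i j → z i / z j ≤ A i j ∧ x i / x j < z i / z j) := by
  have key : ∀ i j : Fin n, ∀ᶠ t in 𝓝[>] (0:ℝ), i ≠ j →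
      (A i j ≤ x i / x j → A i j ≤ (x i/x j) * ((y i/y j)/(x i/x j)) ^ t ∧ (x i/x j) * ((y i/y j)/(x i/x j)) ^ t < x i / x j) ∧
      (x i / x j ≤ A i j → (x i/x j) * ((y i/y j)/(x i/x j)) ^ t ≤ A i j ∧ x i / x j < (x i/x j) * ((y i/y j)/(x i/x j)) ^ t) := by
    intro i j
    by_cases hij : i = j
    · filter_upwards with t h; exact absurd hij h
    · filter_upwards [pair_ev (x i / x j) (y i / y j) (A i j)
        (div_pos (hx i) (hx j)) (div_pos (hy i) (hy j)) (hd i j hij)] with t ht _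
      exact ht
  have all := (Filter.eventually_all.2 fun i => Filter.eventually_all.2 fun j => key i j)
  obtain ⟨t, ht⟩ := all.exists
  refine ⟨fun i => x i * (y i / x i) ^ t,
    fun i => mul_pos (hx i) (Real.rpow_pos_of_pos (div_pos (hy i) (hx i)) t),
    fun i j hij => ?_⟩
  have hratio : (x i * (y i / x i) ^ t) / (x j * (y j / x j) ^ t)
      = (x i/x j) * ((y i/y j)/(x i/x j)) ^ t := by
    rw [mul_div_mul_comm, ← Real.div_rpow (div_pos (hy i) (hx i)).le (div_pos (hy j) (hx j)).le,
      div_div_div_comm]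
  rw [hratio]
  exact ht i j hij

/-- If `w` is strongly inefficient, then there is a weakly efficient
positive weight vector `x*` that internally and strictly dominates `w`. -/
theorem strongly_inefficient_has_weakly_efficient_dominator
    {n : ℕ} (hn : 3 ≤ n) (A : Matrix (Fin n) (Fin n) ℝ)
    (hApos : ∀ i j, 0 < A i j) (hArec : ∀ i j, A i j = (A j i)⁻¹)
    (w : Fin n → ℝ) (hw : ∀ i, 0 < w i)
    (hineff : ∃ w' : Fin n → ℝ, (∀ i, 0 < w' i) ∧
        (∀ i j, i ≠ j → |A i j - w' i / w' j| < |A i j - w i / w j|)) :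
    ∃ xs : Fin n → ℝ, (∀ i, 0 < xs i) ∧
      -- xs is weakly efficient for A
      (¬ ∃ w' : Fin n → ℝ, (∀ i, 0 < w' i) ∧
        (∀ i j, i ≠ j → |A i j - w' i / w' j| < |A i j - xs i / xs j|)) ∧
      -- xs internally and strictly dominates w
      (∀ i j, i ≠ j →
        (A i j ≤ w i / w j → A i j ≤ xs i / xs j ∧ xs i / xs j < w i / w j) ∧
        (A i j ≥ w i / w j → A i j ≥ xs i / xs j ∧ xs i / xs j > w i / w j)) := by
  obtain ⟨w', hw'pos, hw'⟩ := hineff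
  obtain ⟨w2, hw2pos, hw2⟩ := internalize A w w' hw hw'pos hw'
  set i0 : Fin n := ⟨0, by omega⟩ with hi0
  set B : Fin n → Fin n → ℝ := fun i j => w2 i / w2 j with hBdef
  have hBpos : ∀ i j, 0 < B i j := fun i j => div_pos (hw2pos i) (hw2pos j)
  set K : Set (Fin n → ℝ) := {x | x i0 = 1 ∧ ∀ i j, i ≠ j →
      min (A i j) (B i j) * x j ≤ x i ∧ x i ≤ max (A i j) (B i j) * x j} with hKdef
  -- positivity on K
  have hpos : ∀ x ∈ K, ∀ i, 0 < x i := by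
    intro x hx i
    by_cases hi : i = i0
    · rw [hi, hx.1]; exact one_pos
    · have h1 := (hx.2 i i0 hi).1
      rw [hx.1, mul_one] at h1
      exact lt_of_lt_of_le (lt_min (hApos i i0) (hBpos i i0)) h1
  -- ratio bounds on K
  have hrat : ∀ x ∈ K, ∀ i j, i ≠ j →
      min (A i j) (B i j) ≤ x i / x j ∧ x i / x j ≤ max (A i j) (B i j) := by
    intro x hx i j hij
    have hxj := hpos x hx j
    constructor
    · exact (le_div_iff₀ hxj).2 (hx.2 i j hij).1
    · exact (div_le_iff₀ hxj).2 (hx.2 i j hij).2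
  -- K is closed
  have hKclosed : IsClosed K := by
    have : K = {x : Fin n → ℝ | x i0 = 1} ∩ ⋂ i, ⋂ j, {x : Fin n → ℝ | i ≠ j →
        min (A i j) (B i j) * x j ≤ x i ∧ x i ≤ max (A i j) (B i j) * x j} := by
      ext x
      simp only [hKdef, Set.mem_setOf_eq, Set.mem_inter_iff, Set.mem_iInter]
    rw [this]
    refine IsClosed.inter (isClosed_eq (continuous_apply i0) continuous_const)
      (isClosed_iInter fun i => isClosed_iInter fun j => ?_)
    by_cases hij : i = j
    · simp [hij]
    · have : {x : Fin n → ℝ | i ≠ j →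
          min (A i j) (B i j) * x j ≤ x i ∧ x i ≤ max (A i j) (B i j) * x j}
          = {x : Fin n → ℝ | min (A i j) (B i j) * x j ≤ x i} ∩
            {x : Fin n → ℝ | x i ≤ max (A i j) (B i j) * x j} := by
        ext x; simp [hij]
      rw [this]
      exact IsClosed.inter
        (isClosed_le (continuous_const.mul (continuous_apply j)) (continuous_apply i))
        (isClosed_le (continuous_apply i) (continuous_const.mul (continuous_apply j)))
  -- K is contained in a compact box
  set lo : Fin n → ℝ := fun i => if i = i0 then 1 else min (A i i0) (B i i0) with hlo
  set hi : Fin n → ℝ := fun i => if i = i0 then 1 else max (A i i0) (B i i0) with hhi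
  have hsub : K ⊆ Set.pi Set.univ fun i => Set.Icc (lo i) (hi i) := by
    intro x hx
    rw [Set.mem_univ_pi]
    intro i
    by_cases hii : i = i0
    · simp [hlo, hhi, hii, hx.1]
    · have h1 := (hx.2 i i0 hii).1
      have h2 := (hx.2 i i0 hii).2
      rw [hx.1, mul_one] at h1 h2
      simp only [hlo, hhi, if_neg hii, Set.mem_Icc]
      exact ⟨h1, h2⟩
  have hKcpt : IsCompact K :=
    (isCompact_univ_pi fun i => isCompact_Icc).of_isClosed_subset hKclosed hsub
  -- K is nonempty
  have hx0K : (fun i => w2 i / w2 i0) ∈ K := by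
    constructor
    · exact div_self (hw2pos i0).ne'
    · intro i j hij
      have hkey : B i j * (w2 j / w2 i0) = w2 i / w2 i0 := by
        rw [hBdef, div_mul_div_comm, mul_comm (w2 i) (w2 j),
          mul_div_mul_left _ _ (hw2pos j).ne']
      have hj0 : 0 < w2 j / w2 i0 := div_pos (hw2pos j) (hw2pos i0)
      constructor
      · calc min (A i j) (B i j) * (w2 j / w2 i0) ≤ B i j * (w2 j / w2 i0) :=
            mul_le_mul_of_nonneg_right (min_le_right _ _) hj0.le
          _ = w2 i / w2 i0 := hkey
      · calc w2 i / w2 i0 = B i j * (w2 j / w2 i0) := hkey.symm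
          _ ≤ max (A i j) (B i j) * (w2 j / w2 i0) :=
            mul_le_mul_of_nonneg_right (le_max_right _ _) hj0.le
  -- objective function
  set f : (Fin n → ℝ) → ℝ :=
    fun x => ∑ p ∈ Finset.univ.offDiag, |A p.1 p.2 - x p.1 / x p.2| with hfdef
  have hf : ContinuousOn f K := by
    apply continuousOn_finset_sum
    intro p _
    exact (continuousOn_const.sub (((continuous_apply p.1).continuousOn).div
      ((continuous_apply p.2).continuousOn) fun x hx => (hpos x hx p.2).ne')).abs
  obtain ⟨xs, hxsK, hmin⟩ := hKcpt.exists_isMinOn ⟨_, hx0K⟩ hf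
  have hxspos : ∀ i, 0 < xs i := hpos xs hxsK
  refine ⟨xs, hxspos, ?_, ?_⟩
  · -- weak efficiency
    rintro ⟨w3, h3pos, h3⟩
    obtain ⟨z, hzpos, hz⟩ := internalize A xs w3 hxspos h3pos h3
    have hAne : ∀ i j, i ≠ j → A i j ≠ xs i / xs j := by
      intro i j hij he
      have := h3 i j hij
      rw [← he] at this
      simp at this
      linarith [abs_nonneg (A i j - w3 i / w3 j), this]
    set z' : Fin n → ℝ := fun i => z i / z i0 with hz'
    have hzr : ∀ i j, z' i / z' j = z i / z j := by
      intro i j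
      rw [hz', div_div_div_comm, div_self (hzpos i0).ne', div_one]
    have hz'pos : ∀ i, 0 < z' i := fun i => div_pos (hzpos i) (hzpos i0)
    have hz'K : z' ∈ K := by
      constructor
      · exact div_self (hzpos i0).ne'
      · intro i j hij
        have hbnd : min (A i j) (B i j) ≤ z' i / z' j ∧
            z' i / z' j ≤ max (A i j) (B i j) := by
          rw [hzr]
          have hr := hrat xs hxsK i j hij
          rcases le_total (A i j) (xs i / xs j) with hle | hge
          · have h1 := (hz i j hij).1 hle
            exact ⟨le_trans (min_le_left _ _) h1.1, le_trans h1.2.le hr.2⟩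
          · have h2 := (hz i j hij).2 hge
            exact ⟨le_trans hr.1 h2.2.le, le_trans h2.1 (le_max_left _ _)⟩
        exact ⟨(le_div_iff₀ (hz'pos j)).1 hbnd.1, (div_le_iff₀ (hz'pos j)).1 hbnd.2⟩
    have hlt : f z' < f xs := by
      apply Finset.sum_lt_sum_of_nonempty
      · refine ⟨(⟨0, by omega⟩, ⟨1, by omega⟩),
          Finset.mem_offDiag.2 ⟨Finset.mem_univ _, Finset.mem_univ _, ?_⟩⟩
        intro h
        exact absurd (congrArg Fin.val h) (by simp)
      · rintro ⟨i, j⟩ hp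
        rw [Finset.mem_offDiag] at hp
        have hij : i ≠ j := hp.2.2
        rw [hzr]
        have hne := hAne i j hij
        rcases lt_or_gt_of_ne hne with hlt' | hgt'
        · have h1 := (hz i j hij).1 hlt'.le
          rw [abs_sub_comm (A i j) (z i / z j), abs_sub_comm (A i j) (xs i / xs j),
            abs_of_nonneg (by linarith), abs_of_nonneg (by linarith)]
          linarith
        · have h2 := (hz i j hij).2 hgt'.le
          rw [abs_of_nonneg (by linarith), abs_of_nonneg (by linarith)]
          linarith
    exact absurd (hmin hz'K) hlt.not_ge
  · -- dominance over w
    intro i j hij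
    have hr := hrat xs hxsK i j hij
    have hAnew : A i j ≠ w i / w j := by
      intro he
      have := hw' i j hij
      rw [← he] at this
      simp at this
      linarith [abs_nonneg (A i j - w' i / w' j), this]
    constructor
    · intro hle
      have h1 := (hw2 i j hij).1 hle
      have hmin_eq : min (A i j) (B i j) = A i j := min_eq_left h1.1
      have hmax_eq : max (A i j) (B i j) = B i j := max_eq_right h1.1
      rw [hmin_eq] at hr
      rw [hmax_eq] at hr
      exact ⟨hr.1, lt_of_le_of_lt hr.2 h1.2⟩
    · intro hge
      have h2 := (hw2 i j hij).2 hge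
      have hmin_eq : min (A i j) (B i j) = B i j := min_eq_right h2.1
      have hmax_eq : max (A i j) (B i j) = A i j := max_eq_left h2.1
      rw [hmin_eq] at hr
      rw [hmax_eq] at hr
      exact ⟨hr.2, lt_of_lt_of_le h2.2 hr.1⟩
end
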